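/- arXiv:2106.09950 — 8 statements merged into one kernel-verified Lean document; each statement's English description precedes it below -/
import Mathlib

section
/- Let ℓ be a prime and G a closed subgroup of GL_2(ℤ_ℓ). If the reduction of G modulo ℓ contains the scalar matrix λ·Id for some λ ∈ 𝔽_ℓ^×, then G contains λ̃·Id, where λ̃ is the Teichmüller lift of λ. -/
open Filter Topology

variable {p : ℕ} [Fact p.Prime]

local notation "M" => Matrix (Fin 2) (Fin 2) ℤ_[p]

private lemma step_mul (c : ℤ_[p]) (C D : M) :
    (1 + c • C) * (1 + c • D) = 1 + c • (C + D + c • (C * D)) := by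
  simp only [mul_add, add_mul, one_mul, mul_one, smul_add, smul_smul,
    smul_mul_smul_comm]
  ring_nf
  module

private lemma pow_one_add (c : ℤ_[p]) (C : M) (j : ℕ) :
    ∃ D : M, (1 + c • C) ^ j = 1 + c • D := by
  induction j with
  | zero => exact ⟨0, by simp⟩
  | succ j ih =>
    obtain ⟨D, hD⟩ := ih
    exact ⟨D + C + c • (D * C), by rw [pow_succ, hD, step_mul]⟩

private lemma pow_p_step (m : ℕ) (C : M) :
    ∃ D : M, (1 + (p : ℤ_[p]) ^ (m + 1) • C) ^ p = 1 + (p : ℤ_[p]) ^ (m + 2) • D := by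
  set c : ℤ_[p] := (p : ℤ_[p]) ^ (m + 1) with hc
  set X : M := 1 + c • C with hX
  choose D hD using pow_one_add c C
  -- geometric sum
  have hgeom : (∑ j ∈ Finset.range p, X ^ j) * (X - 1) = X ^ p - 1 := geom_sum_mul X p
  have hsum : (∑ j ∈ Finset.range p, X ^ j) = (p : ℤ_[p]) • (1 : M) + c • ∑ j ∈ Finset.range p, D j := by
    have : ∀ j ∈ Finset.range p, X ^ j = 1 + c • D j := fun j _ => hD j
    rw [Finset.sum_congr rfl this, Finset.sum_add_distrib, Finset.sum_const,
      Finset.card_range, ← Finset.smul_sum]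
    congr 1
  have hX1 : X - 1 = c • C := by rw [hX, add_sub_cancel_left]
  refine ⟨C + (p : ℤ_[p]) ^ m • ((∑ j ∈ Finset.range p, D j) * C), ?_⟩
  have : X ^ p - 1 = (p : ℤ_[p]) ^ (m + 2) • (C + (p : ℤ_[p]) ^ m • ((∑ j ∈ Finset.range p, D j) * C)) := by
    rw [← hgeom, hsum, hX1]
    simp only [add_mul, smul_mul_smul_comm, one_mul, smul_add, smul_smul, hc]
    module
  linear_combination (norm := module) this

private lemma pow_pow_cong (B : M) (n : ℕ) :
    ∃ D : M, (1 + (p : ℤ_[p]) • B) ^ (p ^ n) = 1 + (p : ℤ_[p]) ^ (n + 1) • D := by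
  induction n with
  | zero => exact ⟨B, by simp⟩
  | succ n ih =>
    obtain ⟨D, hD⟩ := ih
    obtain ⟨E, hE⟩ := pow_p_step n D
    exact ⟨E, by rw [pow_succ, pow_mul, hD, hE]⟩

private lemma tendsto_one_aux (B : M) :
    Tendsto (fun n => (1 + (p : ℤ_[p]) • B) ^ (p ^ n)) atTop (𝓝 (1 : M)) := by
  choose D hD using pow_pow_cong B
  apply tendsto_pi_nhds.mpr
  intro i
  rw [tendsto_pi_nhds]
  intro j
  rw [tendsto_iff_dist_tendsto_zero]
  have hp1 : (1 : ℝ) < (p : ℝ) := by exact_mod_cast (Fact.out : p.Prime).one_lt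
  have key : ∀ n, dist (((1 + (p : ℤ_[p]) • B) ^ p ^ n) i j) ((1 : M) i j)
      ≤ ((p : ℝ)⁻¹) ^ (n + 1) := by
    intro n
    rw [dist_eq_norm, hD n]
    have : ((1 + (p:ℤ_[p]) ^ (n+1) • D n) : M) i j - (1 : M) i j
        = (p : ℤ_[p]) ^ (n + 1) * (D n) i j := by
      simp [Matrix.add_apply, Matrix.smul_apply, smul_eq_mul]
    rw [this]
    rw [norm_mul, norm_pow, PadicInt.norm_p]
    exact mul_le_of_le_one_right (by positivity) ((D n) i j).norm_le_one
  refine squeeze_zero (fun n => dist_nonneg) key ?_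
  have : Tendsto (fun n : ℕ => ((p : ℝ)⁻¹) ^ n) atTop (𝓝 0) :=
    tendsto_pow_atTop_nhds_zero_of_lt_one (by positivity) (by
      rw [inv_lt_one_iff₀]; right; exact hp1)
  simpa [Function.comp_def] using this.comp (tendsto_add_atTop_nat 1)

private lemma units_pow_fix (u : ℤ_[p]ˣ) (hu : (u : ℤ_[p]) ^ p = u) (n : ℕ) :
    (u : ℤ_[p]) ^ (p ^ n) = u := by
  induction n with
  | zero => simp
  | succ n ih => rw [pow_succ, pow_mul, ih, hu]

private lemma tendsto_scalar (u : ℤ_[p]ˣ) (hu : (u : ℤ_[p]) ^ p = u) (B : M) :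
    Tendsto (fun n => ((u : ℤ_[p]) • (1 : M) + (p : ℤ_[p]) • B) ^ (p ^ n)) atTop
      (𝓝 ((u : ℤ_[p]) • (1 : M))) := by
  have hrw : (u : ℤ_[p]) • (1 : M) + (p : ℤ_[p]) • B
      = (u : ℤ_[p]) • (1 + (p : ℤ_[p]) • ((↑u⁻¹ : ℤ_[p]) • B)) := by
    rw [smul_add]
    congr 1
    rw [smul_comm ((p : ℤ_[p])), smul_smul, Units.mul_inv, one_smul]
  rw [hrw]
  have heq : ∀ n, ((u : ℤ_[p]) • (1 + (p : ℤ_[p]) • ((↑u⁻¹ : ℤ_[p]) • B))) ^ (p ^ n)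
      = (u : ℤ_[p]) • (1 + (p : ℤ_[p]) • ((↑u⁻¹ : ℤ_[p]) • B)) ^ (p ^ n) := by
    intro n
    rw [smul_pow, units_pow_fix u hu]
  simp only [heq]
  have := (tendsto_one_aux ((↑u⁻¹ : ℤ_[p]) • B)).const_smul ((u : ℤ_[p]))
  simpa using this

/-- If a closed subgroup G of GL_2(ℤ_ℓ) has mod-ℓ image containing the scalar
λ·Id, then G contains λ̃·Id, where λ̃ is the Teichmüller lift of λ. -/
theorem stmt4 (ℓ : ℕ) [Fact (Nat.Prime ℓ)] (G : Subgroup (GL (Fin 2) ℤ_[ℓ]))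
    (hG : IsClosed (G : Set (GL (Fin 2) ℤ_[ℓ]))) (lam : (ZMod ℓ)ˣ)
    (hyp : ∃ g ∈ G, ((g : Matrix (Fin 2) (Fin 2) ℤ_[ℓ])).map (PadicInt.toZMod (p := ℓ))
      = (lam : ZMod ℓ) • (1 : Matrix (Fin 2) (Fin 2) (ZMod ℓ)))
    (lamt : ℤ_[ℓ]ˣ) (h1 : ((lamt : ℤ_[ℓ])) ^ ℓ = (lamt : ℤ_[ℓ]))
    (h2 : PadicInt.toZMod ((lamt : ℤ_[ℓ])) = (lam : ZMod ℓ)) :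
    ∃ g ∈ G, (g : Matrix (Fin 2) (Fin 2) ℤ_[ℓ]) = (lamt : ℤ_[ℓ]) • 1 := by
  obtain ⟨g, hg, hred⟩ := hyp
  -- entrywise divisibility
  have hdvd : ∀ i j, ∃ b : ℤ_[ℓ],
      (g : Matrix (Fin 2) (Fin 2) ℤ_[ℓ]) i j
        = (lamt : ℤ_[ℓ]) * (1 : Matrix (Fin 2) (Fin 2) ℤ_[ℓ]) i j + (ℓ : ℤ_[ℓ]) * b := by
    intro i j
    have hent : PadicInt.toZMod ((g : Matrix (Fin 2) (Fin 2) ℤ_[ℓ]) i j)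
        = (lam : ZMod ℓ) * (1 : Matrix (Fin 2) (Fin 2) (ZMod ℓ)) i j := by
      have := congrFun (congrFun hred i) j
      simpa [Matrix.map_apply, Matrix.smul_apply, smul_eq_mul] using this
    have hone : PadicInt.toZMod ((1 : Matrix (Fin 2) (Fin 2) ℤ_[ℓ]) i j)
        = (1 : Matrix (Fin 2) (Fin 2) (ZMod ℓ)) i j := by
      by_cases h : i = j <;> simp [Matrix.one_apply, h]
    have h0 : PadicInt.toZMod ((g : Matrix (Fin 2) (Fin 2) ℤ_[ℓ]) i j
        - (lamt : ℤ_[ℓ]) * (1 : Matrix (Fin 2) (Fin 2) ℤ_[ℓ]) i j) = 0 := by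
      rw [map_sub, map_mul, hent, h2, hone, sub_self]
    have hmem : ((g : Matrix (Fin 2) (Fin 2) ℤ_[ℓ]) i j
        - (lamt : ℤ_[ℓ]) * (1 : Matrix (Fin 2) (Fin 2) ℤ_[ℓ]) i j)
        ∈ Ideal.span {(ℓ : ℤ_[ℓ])} := by
      rw [← PadicInt.maximalIdeal_eq_span_p, ← PadicInt.ker_toZMod]
      exact h0
    rw [Ideal.mem_span_singleton] at hmem
    obtain ⟨b, hb⟩ := hmem
    exact ⟨b, by linear_combination hb⟩
  choose B hB using hdvd
  have hgval : (g : Matrix (Fin 2) (Fin 2) ℤ_[ℓ])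
      = (lamt : ℤ_[ℓ]) • 1 + (ℓ : ℤ_[ℓ]) • Matrix.of B := by
    ext i j
    simp only [Matrix.add_apply, Matrix.smul_apply, smul_eq_mul, Matrix.of_apply]
    exact hB i j
  -- the inverse
  have e2 : (↑g⁻¹ : Matrix (Fin 2) (Fin 2) ℤ_[ℓ])
      * ((lamt : ℤ_[ℓ]) • 1 + (ℓ : ℤ_[ℓ]) • Matrix.of B) = 1 := by
    rw [← hgval]; exact Units.inv_mul g
  rw [mul_add, mul_smul_comm, mul_one, mul_smul_comm] at e2
  have e1 : (lamt : ℤ_[ℓ]) • (↑g⁻¹ : Matrix (Fin 2) (Fin 2) ℤ_[ℓ])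
      = 1 - (ℓ : ℤ_[ℓ]) • ((↑g⁻¹ : Matrix (Fin 2) (Fin 2) ℤ_[ℓ]) * Matrix.of B) :=
    eq_sub_of_add_eq e2
  have hginv : (↑g⁻¹ : Matrix (Fin 2) (Fin 2) ℤ_[ℓ])
      = (↑lamt⁻¹ : ℤ_[ℓ]) • 1 + (ℓ : ℤ_[ℓ]) •
        ((↑lamt⁻¹ : ℤ_[ℓ]) • (-((↑g⁻¹ : Matrix (Fin 2) (Fin 2) ℤ_[ℓ]) * Matrix.of B))) := by
    have h3 := congrArg (fun Z : Matrix (Fin 2) (Fin 2) ℤ_[ℓ] => (↑lamt⁻¹ : ℤ_[ℓ]) • Z) e1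
    simp only [smul_smul, Units.inv_mul, one_smul, smul_sub] at h3
    conv_lhs => rw [h3]
    simp only [smul_neg, smul_smul]
    module
  have h1' : (↑lamt⁻¹ : ℤ_[ℓ]) ^ ℓ = (↑lamt⁻¹ : ℤ_[ℓ]) := by
    have hu : lamt ^ ℓ = lamt := Units.ext (by rw [Units.val_pow_eq_pow_val, h1])
    rw [← Units.val_pow_eq_pow_val, inv_pow, hu]
  -- the scalar unit
  refine ⟨⟨(lamt : ℤ_[ℓ]) • 1, (↑lamt⁻¹ : ℤ_[ℓ]) • 1,
    by rw [smul_mul_smul_comm, one_mul, Units.mul_inv, one_smul],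
    by rw [smul_mul_smul_comm, one_mul, Units.inv_mul, one_smul]⟩, ?_, rfl⟩
  -- convergence
  have t1 : Tendsto (fun n => ((↑(g ^ ℓ ^ n) : Matrix (Fin 2) (Fin 2) ℤ_[ℓ])))
      atTop (𝓝 ((lamt : ℤ_[ℓ]) • 1)) := by
    simp only [Units.val_pow_eq_pow_val, hgval]
    exact tendsto_scalar lamt h1 (Matrix.of B)
  have t2 : Tendsto (fun n => ((↑((g ^ ℓ ^ n)⁻¹) : Matrix (Fin 2) (Fin 2) ℤ_[ℓ])))
      atTop (𝓝 ((↑lamt⁻¹ : ℤ_[ℓ]) • 1)) := by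
    have key : ∀ n : ℕ, (↑((g ^ ℓ ^ n)⁻¹) : Matrix (Fin 2) (Fin 2) ℤ_[ℓ])
        = ((↑lamt⁻¹ : ℤ_[ℓ]) • 1 + (ℓ : ℤ_[ℓ]) • ((↑lamt⁻¹ : ℤ_[ℓ]) •
          (-((↑g⁻¹ : Matrix (Fin 2) (Fin 2) ℤ_[ℓ]) * Matrix.of B)))) ^ ℓ ^ n := by
      intro n
      conv_lhs => rw [← inv_pow, Units.val_pow_eq_pow_val, hginv]
    simp only [key]
    exact tendsto_scalar lamt⁻¹ h1' _
  have tends : Tendsto (fun n => g ^ ℓ ^ n) atTop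
      (𝓝 (⟨(lamt : ℤ_[ℓ]) • 1, (↑lamt⁻¹ : ℤ_[ℓ]) • 1,
        by rw [smul_mul_smul_comm, one_mul, Units.mul_inv, one_smul],
        by rw [smul_mul_smul_comm, one_mul, Units.inv_mul, one_smul]⟩ :
        GL (Fin 2) ℤ_[ℓ])) := by
    rw [Units.isInducing_embedProduct.tendsto_nhds_iff]
    exact (t1.prodMk_nhds ((MulOpposite.continuous_op.tendsto _).comp t2))
  exact hG.mem_of_tendsto tends (Eventually.of_forall fun n => pow_mem hg _)
end

section
/- Let n be a positive integer, ℓ > 2 a prime, and G a closed subgroup of GL_2(ℤ_ℓ) with det(G) = ℤ_ℓ^×. Let H_n = {g ∈ G : g ≡ Id (mod ℓ^n)}. If ℓ does not divide the order of the reduction of G modulo ℓ, then det(H_n) = 1 + ℓ^n ℤ_ℓ. -/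
section Aux

variable {ℓ : ℕ} [hF : Fact (Nat.Prime ℓ)]

private lemma unit_of_dvd_sub_one {a : ℤ_[ℓ]} (h : (ℓ : ℤ_[ℓ]) ∣ a - 1) : IsUnit a := by
  by_contra hu
  have hmem : a ∈ IsLocalRing.maximalIdeal ℤ_[ℓ] := (IsLocalRing.mem_maximalIdeal a).mpr hu
  rw [PadicInt.maximalIdeal_eq_span_p, Ideal.mem_span_singleton] at hmem
  have h1 : (ℓ : ℤ_[ℓ]) ∣ 1 := by
    have := dvd_sub hmem h
    simpa using this
  exact PadicInt.prime_p.not_unit (isUnit_of_dvd_one h1)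

/-- Binomial expansion of `(1+d)^ℓ` keeping track of divisibility, for `ℓ` odd, `ℓ ∣ d`. -/
private lemma pow_prime_expand (hodd : 2 < ℓ) {d : ℤ_[ℓ]} (hd : (ℓ : ℤ_[ℓ]) ∣ d) :
    ∃ e : ℤ_[ℓ], (1 + d) ^ ℓ = 1 + ℓ * d + ℓ * d ^ 2 * e := by
  have hp := hF.out
  obtain ⟨t, ht⟩ : ∃ t, ℓ = t + 2 := ⟨ℓ - 2, by omega⟩
  subst ht
  have h1 : (1 + d) ^ (t + 2) = ∑ i ∈ Finset.range (t + 2 + 1),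
      d ^ i * (Nat.choose (t + 2) i : ℤ_[t + 2]) := by
    rw [add_comm 1 d, add_pow]
    simp
  rw [Finset.sum_range_succ' _ (t + 2), Finset.sum_range_succ' _ (t + 1)] at h1
  have hdvd : ((t + 2 : ℕ) : ℤ_[t + 2]) * d ^ 2 ∣
      ∑ i ∈ Finset.range (t + 1), d ^ (i + 1 + 1) * (Nat.choose (t + 2) (i + 1 + 1) : ℤ_[t + 2]) := by
    refine Finset.dvd_sum fun i hi => ?_
    have hi' : i < t + 1 := Finset.mem_range.mp hi
    rcases lt_or_eq_of_le (by omega : i + 2 ≤ t + 2) with hlt | heq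
    · have hc : ((t + 2 : ℕ) : ℤ_[t + 2]) ∣ (Nat.choose (t + 2) (i + 1 + 1) : ℤ_[t + 2]) :=
        Nat.cast_dvd_cast (hp.dvd_choose_self (by omega) hlt)
      have h5 : d ^ 2 * ((t + 2 : ℕ) : ℤ_[t + 2]) ∣
          d ^ (i + 1 + 1) * (Nat.choose (t + 2) (i + 1 + 1) : ℤ_[t + 2]) :=
        mul_dvd_mul (pow_dvd_pow d (by omega)) hc
      rwa [mul_comm ((t + 2 : ℕ) : ℤ_[t + 2]) (d ^ 2)]
    · have h3 : ((t + 2 : ℕ) : ℤ_[t + 2]) * d ^ 2 ∣ d ^ t * d ^ 2 :=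
        mul_dvd_mul (hd.trans (dvd_pow_self d (by omega))) dvd_rfl
      have h4 : i + 1 + 1 = t + 2 := by omega
      rw [h4, Nat.choose_self]
      have h5 : d ^ (t + 2) = d ^ t * d ^ 2 := by ring
      rw [h5]
      simpa using h3
  obtain ⟨e, he⟩ := hdvd
  refine ⟨e, ?_⟩
  rw [h1, he]
  simp [Nat.choose_one_right]
  ring

private lemma exists_prime_root (hodd : 2 < ℓ) {x : ℤ_[ℓ]} {s : ℕ} (hs : 2 ≤ s)
    (hx : (ℓ : ℤ_[ℓ]) ^ s ∣ x - 1) :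
    ∃ z : ℤ_[ℓ], (ℓ : ℤ_[ℓ]) ^ (s - 1) ∣ z - 1 ∧ z ^ ℓ = x := by
  have hp := hF.out
  obtain ⟨s', rfl⟩ : ∃ s', s = s' + 2 := ⟨s - 2, by omega⟩
  obtain ⟨u, hu⟩ := id hx
  set d : ℤ_[ℓ] := (ℓ : ℤ_[ℓ]) ^ (s' + 1) * u with hd_def
  have hd : (ℓ : ℤ_[ℓ]) ∣ d := dvd_mul_of_dvd_left (dvd_pow_self _ (by omega)) u
  obtain ⟨e, he⟩ := pow_prime_expand hodd hd
  set F : Polynomial ℤ_[ℓ] := Polynomial.X ^ ℓ - Polynomial.C x with hF_def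
  set a : ℤ_[ℓ] := 1 + d with ha_def
  have hFa : F.eval a = (ℓ : ℤ_[ℓ]) * d ^ 2 * e := by
    simp only [hF_def, Polynomial.eval_sub, Polynomial.eval_pow, Polynomial.eval_X,
      Polynomial.eval_C, ha_def]
    rw [he]
    have hx' : x = 1 + (ℓ : ℤ_[ℓ]) * d := by
      rw [hd_def]
      have : x - 1 = (ℓ : ℤ_[ℓ]) ^ (s' + 2) * u := hu
      linear_combination this + (pow_succ (ℓ : ℤ_[ℓ]) (s' + 1)).symm * u
    rw [hx']
    ring
  have haunit : IsUnit a := unit_of_dvd_sub_one (by simpa [ha_def] using hd)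
  have hFderiv : F.derivative.eval a = (ℓ : ℤ_[ℓ]) * a ^ (ℓ - 1) := by
    simp [hF_def, Polynomial.derivative_X_pow]
  have hnormd : ‖F.derivative.eval a‖ = (ℓ : ℝ)⁻¹ := by
    rw [hFderiv, norm_mul, norm_pow, PadicInt.isUnit_iff.mp haunit,
      PadicInt.norm_p]
    simp
  have hℓ1 : (1 : ℝ) < ℓ := by exact_mod_cast hp.one_lt
  have hcond : ‖F.eval a‖ < ‖F.derivative.eval a‖ ^ 2 := by
    have h3 : (ℓ : ℤ_[ℓ]) ^ 3 ∣ F.eval a := by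
      rw [hFa, hd_def]
      exact ⟨(ℓ : ℤ_[ℓ]) ^ (2 * s') * u ^ 2 * e, by ring⟩
    have hle : ‖F.eval a‖ ≤ (ℓ : ℝ) ^ (-(3 : ℕ) : ℤ) :=
      (PadicInt.norm_le_pow_iff_mem_span_pow _ 3).mpr (Ideal.mem_span_singleton.mpr h3)
    have h2 : ‖F.derivative.eval a‖ ^ 2 = (ℓ : ℝ) ^ (-(2 : ℕ) : ℤ) := by
      rw [hnormd]
      rw [zpow_neg, zpow_natCast, inv_pow]
    rw [h2]
    exact lt_of_le_of_lt hle (zpow_lt_zpow_right₀ hℓ1 (by norm_num))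
  obtain ⟨z, hz0, hza, -, -⟩ := hensels_lemma hcond
  have hzx : z ^ ℓ = x := by
    have := hz0
    simp only [hF_def, Polynomial.coe_aeval_eq_eval, Polynomial.eval_sub, Polynomial.eval_pow, Polynomial.eval_X,
      Polynomial.eval_C, sub_eq_zero] at this
    exact this
  have hz1 : (ℓ : ℤ_[ℓ]) ∣ z - 1 := by
    have hza' : (ℓ : ℤ_[ℓ]) ∣ z - a := by
      rw [← PadicInt.norm_lt_one_iff_dvd]
      calc ‖z - a‖ < ‖F.derivative.eval a‖ := hza
        _ ≤ 1 := by rw [hnormd]; exact inv_le_one_of_one_le₀ hℓ1.le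
    have : z - 1 = (z - a) + d := by rw [ha_def]; ring
    rw [this]
    exact dvd_add hza' hd
  obtain ⟨e', he'⟩ := pow_prime_expand hodd hz1
  have hkey : x - 1 = (ℓ : ℤ_[ℓ]) * ((z - 1) * (1 + (z - 1) * e')) := by
    have h6 : (1 + (z - 1)) ^ ℓ = z ^ ℓ := by norm_num
    rw [← hzx, ← h6, he']
    ring
  have hun : IsUnit (1 + (z - 1) * e') :=
    unit_of_dvd_sub_one (by simpa using hz1.mul_right e')
  refine ⟨z, ?_, hzx⟩
  have hℓ0 : (ℓ : ℤ_[ℓ]) ≠ 0 := by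
    exact_mod_cast Nat.cast_ne_zero.mpr hp.ne_zero
  have hx2 : (ℓ : ℤ_[ℓ]) * (ℓ : ℤ_[ℓ]) ^ (s' + 1) ∣
      (ℓ : ℤ_[ℓ]) * ((z - 1) * (1 + (z - 1) * e')) := by
    rw [← hkey, ← pow_succ']
    exact hx
  have hx3 : (ℓ : ℤ_[ℓ]) ^ (s' + 1) ∣ (z - 1) * (1 + (z - 1) * e') :=
    (mul_dvd_mul_iff_left hℓ0).mp hx2
  simpa using (hun.dvd_mul_right).mp hx3

private lemma exists_prime_pow_root (hodd : 2 < ℓ) (t : ℕ) :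
    ∀ x : ℤ_[ℓ], (ℓ : ℤ_[ℓ]) ^ (t + 1) ∣ x - 1 →
      ∃ w : ℤ_[ℓ], (ℓ : ℤ_[ℓ]) ∣ w - 1 ∧ w ^ (ℓ ^ t) = x := by
  induction t with
  | zero => exact fun x hx => ⟨x, by simpa using hx, by simp⟩
  | succ t ih =>
    intro x hx
    obtain ⟨z, hz1, hzx⟩ := exists_prime_root hodd (s := t + 2) (by omega) hx
    obtain ⟨w, hw1, hwz⟩ := ih z (by simpa using hz1)
    exact ⟨w, hw1, by rw [pow_succ, pow_mul, hwz, hzx]⟩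

private lemma exists_m_root {m : ℕ} (hm : ¬ ℓ ∣ m) {w : ℤ_[ℓ]} (hw : (ℓ : ℤ_[ℓ]) ∣ w - 1) :
    ∃ y : ℤ_[ℓ], y ^ m = w := by
  have hp := hF.out
  set F : Polynomial ℤ_[ℓ] := Polynomial.X ^ m - Polynomial.C w with hF_def
  have hFa : F.eval 1 = 1 - w := by simp [hF_def]
  have hFd : F.derivative.eval 1 = (m : ℤ_[ℓ]) := by
    simp [hF_def, Polynomial.derivative_X_pow]
  have hnm : ‖(m : ℤ_[ℓ])‖ = 1 := by
    refine le_antisymm (PadicInt.norm_le_one _) ?_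
    by_contra h
    push_neg at h
    have : ((m : ℤ) : ℤ_[ℓ]) = (m : ℤ_[ℓ]) := by push_cast; ring
    rw [← this] at h
    have := (PadicInt.norm_int_lt_one_iff_dvd (m : ℤ)).mp h
    exact hm (by exact_mod_cast this)
  have hcond : ‖F.eval 1‖ < ‖F.derivative.eval 1‖ ^ 2 := by
    rw [hFa, hFd, hnm, one_pow]
    rw [PadicInt.norm_lt_one_iff_dvd]
    simpa using hw.neg_right
  obtain ⟨z, hz0, -, -, -⟩ := hensels_lemma hcond
  refine ⟨z, ?_⟩
  simpa [hF_def, sub_eq_zero] using hz0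

private lemma mat_mul_dvd {A B : Matrix (Fin 2) (Fin 2) ℤ_[ℓ]} {a b : ℤ_[ℓ]}
    (hA : ∀ i j, a ∣ A i j) (hB : ∀ i j, b ∣ B i j) : ∀ i j, a * b ∣ (A * B) i j := by
  intro i j
  rw [Matrix.mul_apply]
  exact Finset.dvd_sum fun k _ => mul_dvd_mul (hA i k) (hB k j)

private lemma mat_pow_dvd {A : Matrix (Fin 2) (Fin 2) ℤ_[ℓ]} {a : ℤ_[ℓ]}
    (hA : ∀ i j, a ∣ A i j) : ∀ t, ∀ i j, a ^ (t + 1) ∣ (A ^ (t + 1)) i j := by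
  intro t
  induction t with
  | zero => simpa using hA
  | succ t ih =>
    intro i j
    rw [pow_succ A (t + 1), pow_succ a (t + 1)]
    exact mat_mul_dvd ih hA i j

private lemma mat_step (hodd : 2 < ℓ) {A : Matrix (Fin 2) (Fin 2) ℤ_[ℓ]} {j : ℕ} (hj : 1 ≤ j)
    (hA : ∀ r c, (ℓ : ℤ_[ℓ]) ^ j ∣ (A - 1) r c) :
    ∀ r c, (ℓ : ℤ_[ℓ]) ^ (j + 1) ∣ (A ^ ℓ - 1) r c := by
  have hp := hF.out
  set C : Matrix (Fin 2) (Fin 2) ℤ_[ℓ] := A - 1 with hC_def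
  have hA' : A = C + 1 := by rw [hC_def]; simp
  have hexp : A ^ ℓ = ∑ i ∈ Finset.range (ℓ + 1),
      C ^ i * ((Nat.choose ℓ i : ℕ) : Matrix (Fin 2) (Fin 2) ℤ_[ℓ]) := by
    rw [hA', (Commute.one_right C).add_pow]
    simp
  rw [Finset.sum_range_succ' _ ℓ] at hexp
  have hexp2 : A ^ ℓ - 1 = ∑ i ∈ Finset.range ℓ,
      C ^ (i + 1) * ((Nat.choose ℓ (i + 1) : ℕ) : Matrix (Fin 2) (Fin 2) ℤ_[ℓ]) := by
    rw [hexp]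
    simp
  intro r c
  rw [hexp2, Matrix.sum_apply]
  refine Finset.dvd_sum fun i hi => ?_
  have hterm : (C ^ (i + 1) * ((Nat.choose ℓ (i + 1) : ℕ) : Matrix (Fin 2) (Fin 2) ℤ_[ℓ])) r c
      = ((Nat.choose ℓ (i + 1) : ℕ) : ℤ_[ℓ]) * ((C ^ (i + 1)) r c) := by
    rw [← (Nat.cast_commute (Nat.choose ℓ (i + 1))
      (C ^ (i + 1))).eq, ← nsmul_eq_mul, Matrix.smul_apply, nsmul_eq_mul]
  rw [hterm]
  rcases Nat.eq_zero_or_pos i with hi0 | hi1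
  · subst hi0
    rw [Nat.choose_one_right]
    have : (ℓ : ℤ_[ℓ]) * (ℓ : ℤ_[ℓ]) ^ j ∣ (ℓ : ℤ_[ℓ]) * (C ^ 1) r c := by
      rw [pow_one]
      exact mul_dvd_mul_left _ (hA r c)
    rwa [← pow_succ'] at this
  · have h1 : ((ℓ : ℤ_[ℓ]) ^ j) ^ (i + 1) ∣ (C ^ (i + 1)) r c := mat_pow_dvd hA i r c
    have h2 : (ℓ : ℤ_[ℓ]) ^ (j + 1) ∣ ((ℓ : ℤ_[ℓ]) ^ j) ^ (i + 1) := by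
      rw [← pow_mul]
      refine pow_dvd_pow _ ?_
      have hji : 1 ≤ j * i := Nat.one_le_iff_ne_zero.mpr (Nat.mul_ne_zero (by omega) (by omega))
      calc j + 1 ≤ j * i + j := by omega
        _ = j * (i + 1) := by ring
    exact ((h2.trans h1).mul_left _)

private lemma mat_iter (hodd : 2 < ℓ) {A : Matrix (Fin 2) (Fin 2) ℤ_[ℓ]}
    (hA : ∀ r c, (ℓ : ℤ_[ℓ]) ∣ (A - 1) r c) :
    ∀ t r c, (ℓ : ℤ_[ℓ]) ^ (t + 1) ∣ (A ^ ℓ ^ t - 1) r c := by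
  intro t
  induction t with
  | zero => simpa using hA
  | succ t ih =>
    have h1 : A ^ ℓ ^ (t + 1) = (A ^ ℓ ^ t) ^ ℓ := by rw [← pow_mul, ← pow_succ]
    rw [h1]
    exact mat_step hodd (by omega) ih

end Aux

/-- The reduction map GL_2(ℤ_ℓ) → GL_2(𝔽_ℓ). -/
noncomputable def redGL (ℓ : ℕ) [Fact (Nat.Prime ℓ)] :
    GL (Fin 2) ℤ_[ℓ] →* GL (Fin 2) (ZMod ℓ) :=
  Units.map ((PadicInt.toZMod (p := ℓ)).mapMatrix).toMonoidHom

/-- If G is a closed subgroup of GL_2(ℤ_ℓ) (ℓ > 2) with surjective determinant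
and mod-ℓ image of order prime to ℓ, then the determinants of the elements of
G congruent to Id mod ℓ^n form exactly the group 1 + ℓ^n ℤ_ℓ. -/
theorem stmt5 (ℓ : ℕ) [Fact (Nat.Prime ℓ)] (hℓ : 2 < ℓ) (n : ℕ) (hn : 0 < n)
    (G : Subgroup (GL (Fin 2) ℤ_[ℓ])) (hG : IsClosed (G : Set (GL (Fin 2) ℤ_[ℓ])))
    (hdet : ∀ u : ℤ_[ℓ]ˣ, ∃ g ∈ G, ((g : Matrix (Fin 2) (Fin 2) ℤ_[ℓ])).det = u)
    (hord : ¬ ℓ ∣ Nat.card (Subgroup.map (redGL ℓ) G)) :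
    {x : ℤ_[ℓ] | ∃ g ∈ G,
        (∀ i j, ((ℓ : ℤ_[ℓ])) ^ n ∣ ((g : Matrix (Fin 2) (Fin 2) ℤ_[ℓ]) - 1) i j) ∧
        ((g : Matrix (Fin 2) (Fin 2) ℤ_[ℓ])).det = x}
      = {x : ℤ_[ℓ] | ((ℓ : ℤ_[ℓ])) ^ n ∣ x - 1} := by
  have hp := ‹Fact (Nat.Prime ℓ)›.out
  ext x
  simp only [Set.mem_setOf_eq]
  constructor
  · rintro ⟨g, hg, hcong, hdx⟩
    set A : Matrix (Fin 2) (Fin 2) ℤ_[ℓ] := (g : Matrix (Fin 2) (Fin 2) ℤ_[ℓ]) with hA_def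
    obtain ⟨a, ha⟩ := hcong 0 0
    obtain ⟨b, hb⟩ := hcong 0 1
    obtain ⟨c, hc⟩ := hcong 1 0
    obtain ⟨d, hd⟩ := hcong 1 1
    have e00 : A 0 0 = 1 + (ℓ : ℤ_[ℓ]) ^ n * a := by
      have := ha; simp [Matrix.sub_apply, Matrix.one_apply] at this; linear_combination this
    have e01 : A 0 1 = (ℓ : ℤ_[ℓ]) ^ n * b := by
      have := hb; simp [Matrix.sub_apply, Matrix.one_apply] at this; linear_combination this
    have e10 : A 1 0 = (ℓ : ℤ_[ℓ]) ^ n * c := by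
      have := hc; simp [Matrix.sub_apply, Matrix.one_apply] at this; linear_combination this
    have e11 : A 1 1 = 1 + (ℓ : ℤ_[ℓ]) ^ n * d := by
      have := hd; simp [Matrix.sub_apply, Matrix.one_apply] at this; linear_combination this
    rw [Matrix.det_fin_two] at hdx
    exact ⟨a + d + (ℓ : ℤ_[ℓ]) ^ n * (a * d) - (ℓ : ℤ_[ℓ]) ^ n * (b * c), by
      rw [← hdx, e00, e01, e10, e11]; ring⟩
  · intro hx
    obtain ⟨n', rfl⟩ : ∃ n', n = n' + 1 := ⟨n - 1, by omega⟩
    set m := Nat.card (Subgroup.map (redGL ℓ) G) with hm_def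
    obtain ⟨w, hw1, hw⟩ := exists_prime_pow_root hℓ n' x hx
    obtain ⟨y, hy⟩ := exists_m_root hord hw1
    have hxu : IsUnit x :=
      unit_of_dvd_sub_one ((dvd_pow_self (ℓ : ℤ_[ℓ]) (Nat.succ_ne_zero n')).trans hx)
    have hyx : y ^ (m * ℓ ^ n') = x := by rw [pow_mul, hy, hw]
    have hm0 : m ≠ 0 := fun h => hord (h ▸ dvd_zero ℓ)
    have hyu : IsUnit y :=
      (isUnit_pow_iff (Nat.mul_ne_zero hm0 (pow_ne_zero n' hp.ne_zero))).mp (hyx ▸ hxu)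
    obtain ⟨g, hgG, hgdet⟩ := hdet hyu.unit
    have hgdet' : ((g : Matrix (Fin 2) (Fin 2) ℤ_[ℓ])).det = y := by
      rw [hgdet, IsUnit.unit_spec]
    have hred : redGL ℓ (g ^ m) = 1 := by
      have hmem : redGL ℓ g ∈ Subgroup.map (redGL ℓ) G := ⟨g, hgG, rfl⟩
      have h1 : (⟨redGL ℓ g, hmem⟩ : Subgroup.map (redGL ℓ) G) ^ m = 1 := pow_card_eq_one'
      have h2 := congrArg (Subtype.val) h1
      rw [SubmonoidClass.coe_pow] at h2
      rw [map_pow]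
      exact h2
    have hdvd1 : ∀ r c, (ℓ : ℤ_[ℓ]) ∣
        (((g ^ m : GL (Fin 2) ℤ_[ℓ]) : Matrix (Fin 2) (Fin 2) ℤ_[ℓ]) - 1) r c := by
      have hmap : (((g ^ m : GL (Fin 2) ℤ_[ℓ]) : Matrix (Fin 2) (Fin 2) ℤ_[ℓ])).map
          (PadicInt.toZMod (p := ℓ)) = 1 := by
        have := congrArg Units.val hred
        simp only [redGL, Units.coe_map, RingHom.toMonoidHom_eq_coe, MonoidHom.coe_coe,
          RingHom.mapMatrix_apply, Units.val_one] at this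
        exact this
      intro r c
      have hzero : PadicInt.toZMod
          ((((g ^ m : GL (Fin 2) ℤ_[ℓ]) : Matrix (Fin 2) (Fin 2) ℤ_[ℓ]) - 1) r c) = 0 := by
        have hsub : (((g ^ m : GL (Fin 2) ℤ_[ℓ]) : Matrix (Fin 2) (Fin 2) ℤ_[ℓ]) - 1).map
            (PadicInt.toZMod (p := ℓ)) = 0 := by
          rw [Matrix.map_sub _ (fun x y => map_sub _ x y), hmap,
            Matrix.map_one _ (map_zero _) (map_one _)]
          simp
        have := congrFun (congrFun hsub r) c
        simpa [Matrix.map_apply] using this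
      have hker := hzero
      rw [← RingHom.mem_ker, PadicInt.ker_toZMod, PadicInt.maximalIdeal_eq_span_p,
        Ideal.mem_span_singleton] at hker
      exact hker
    have hdvdn := mat_iter hℓ hdvd1 n'
    refine ⟨g ^ (m * ℓ ^ n'), G.pow_mem hgG _, ?_, ?_⟩
    · intro i j
      have hcoe : ((g ^ (m * ℓ ^ n') : GL (Fin 2) ℤ_[ℓ]) : Matrix (Fin 2) (Fin 2) ℤ_[ℓ])
          = ((g ^ m : GL (Fin 2) ℤ_[ℓ]) : Matrix (Fin 2) (Fin 2) ℤ_[ℓ]) ^ ℓ ^ n' := by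
        rw [← Units.val_pow_eq_pow_val, ← pow_mul]
      rw [hcoe]
      exact hdvdn i j
    · rw [Units.val_pow_eq_pow_val, Matrix.det_pow, hgdet', hyx]
end

section
/- Let ℓ > 2 be a prime and G a closed subgroup of GL_2(ℤ_ℓ) with det(G) = ℤ_ℓ^×, whose mod-ℓ image G_ℓ contains τ = [[0,1],[1,0]], and such that ℓ does not divide #G_ℓ. If G_ℓ contains an element u with uτ = −τu, then G contains all scalar matrices λ·Id with λ ∈ 1 + ℓℤ_ℓ. -/
open Matrix Filter

section Aux

variable {ℓ : ℕ} [Fact (Nat.Prime ℓ)]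

noncomputable def piM : Matrix (Fin 2) (Fin 2) ℤ_[ℓ] →+* Matrix (Fin 2) (Fin 2) (ZMod ℓ) :=
  (PadicInt.toZMod (p := ℓ)).mapMatrix

local notation "M" => Matrix (Fin 2) (Fin 2) ℤ_[ℓ]
local notation "Mz" => Matrix (Fin 2) (Fin 2) (ZMod ℓ)
local notation "π" => piM (ℓ := ℓ)

lemma dvd_of_toZMod_eq_zero {x : ℤ_[ℓ]} (h : PadicInt.toZMod x = 0) : (ℓ : ℤ_[ℓ]) ∣ x := by
  have : x ∈ RingHom.ker (PadicInt.toZMod : ℤ_[ℓ] →+* ZMod ℓ) := h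
  rwa [PadicInt.ker_toZMod, PadicInt.maximalIdeal_eq_span_p, Ideal.mem_span_singleton] at this

lemma isUnit_of_not_dvd {x : ℤ_[ℓ]} (h : ¬ (ℓ : ℤ_[ℓ]) ∣ x) : IsUnit x := by
  rw [PadicInt.isUnit_iff]
  rcases lt_or_eq_of_le (PadicInt.norm_le_one x) with h' | h'
  · exact absurd ((PadicInt.norm_lt_one_iff_dvd x).mp h') h
  · exact h'

lemma not_dvd_nat {k : ℕ} (h : ¬ ℓ ∣ k) : ¬ (ℓ : ℤ_[ℓ]) ∣ (k : ℤ_[ℓ]) := by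
  intro hd
  have : ‖((k : ℤ) : ℤ_[ℓ])‖ < 1 := by
    rw [Int.cast_natCast]
    exact (PadicInt.norm_lt_one_iff_dvd _).mpr hd
  rw [PadicInt.norm_int_lt_one_iff_dvd] at this
  exact h (Int.ofNat_dvd.mp this)

lemma isUnit_of_dvd_sub {x : ℤ_[ℓ]} {c : ℕ} (h : (ℓ : ℤ_[ℓ]) ∣ x - (c : ℤ_[ℓ]))
    (hc : ¬ ℓ ∣ c) : IsUnit x := by
  apply isUnit_of_not_dvd
  intro hd
  exact not_dvd_nat hc (by simpa using dvd_sub hd h)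

/-- k-th roots of elements ≡ 1 mod ℓ, for k prime to ℓ. -/
lemma exists_root {k : ℕ} (hk : ¬ ℓ ∣ k) {lam : ℤ_[ℓ]}
    (h : (ℓ : ℤ_[ℓ]) ∣ lam - 1) : ∃ ν : ℤ_[ℓ], ν ^ k = lam ∧ (ℓ : ℤ_[ℓ]) ∣ ν - 1 := by
  set F : Polynomial ℤ_[ℓ] := Polynomial.X ^ k - Polynomial.C lam with hF
  have hev : F.eval 1 = 1 - lam := by simp [hF]
  have hder : F.derivative.eval 1 = (k : ℤ_[ℓ]) := by
    simp [hF, Polynomial.derivative_pow]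
  have hdern : ‖F.derivative.eval 1‖ = 1 := by
    rw [hder]; exact PadicInt.isUnit_iff.mp (isUnit_of_not_dvd (not_dvd_nat hk))
  have hnorm : ‖F.eval 1‖ < ‖F.derivative.eval 1‖ ^ 2 := by
    rw [hdern, hev, one_pow, ← neg_sub, norm_neg]
    exact (PadicInt.norm_lt_one_iff_dvd _).mpr h
  obtain ⟨z, hz, hz1, -, -⟩ := hensels_lemma hnorm
  refine ⟨z, ?_, ?_⟩
  · have : z ^ k - lam = 0 := by simpa [hF] using hz
    exact sub_eq_zero.mp this
  · rw [← PadicInt.norm_lt_one_iff_dvd]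
    calc ‖z - 1‖ < ‖F.derivative.eval 1‖ := hz1
    _ = 1 := hdern

lemma pi_smul (r : ℤ_[ℓ]) (X : M) : π (r • X) = PadicInt.toZMod r • π X := by
  ext i j
  simp [piM, RingHom.mapMatrix_apply, Matrix.map_apply, Matrix.smul_apply, smul_eq_mul]

lemma pi_trace (X : M) : (π X).trace = PadicInt.toZMod X.trace := by
  simp [piM, Matrix.trace_fin_two, RingHom.mapMatrix_apply, Matrix.map_apply]

lemma pi_lift {X C : M} (h : π X = π C) : ∃ A : M, X = C + (ℓ : ℤ_[ℓ]) • A := by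
  have hd : ∀ i j, (ℓ : ℤ_[ℓ]) ∣ (X i j - C i j) := by
    intro i j
    apply dvd_of_toZMod_eq_zero
    have := congrFun (congrFun (congrArg (fun Y => Y) h) i) j
    simp only [piM, RingHom.mapMatrix_apply, Matrix.map_apply] at this
    rw [map_sub, this, sub_self]
  choose A hA using fun i j => hd i j
  refine ⟨Matrix.of A, ?_⟩
  ext i j
  have := hA i j
  simp only [Matrix.add_apply, Matrix.smul_apply, Matrix.of_apply, smul_eq_mul]
  linear_combination this

lemma pi_pow_smul (n : ℕ) (X : M) : π ((ℓ : ℤ_[ℓ]) ^ (n+1) • X) = 0 := by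
  rw [pi_smul]
  have h0 : PadicInt.toZMod ((ℓ : ℤ_[ℓ]) ^ (n+1)) = 0 := by
    rw [map_pow]
    have : PadicInt.toZMod (ℓ : ℤ_[ℓ]) = 0 := by
      rw [map_natCast, ZMod.natCast_self]
    rw [this, zero_pow (Nat.succ_ne_zero n)]
  rw [h0, zero_smul]

lemma conj_form (C C' X : M) (h : C * C' = 1) (ν x : ℤ_[ℓ]) :
    C * (ν • 1 + x • X) * C' = ν • (1 : M) + x • (C * X * C') := by
  rw [mul_add, add_mul, mul_smul_comm, smul_mul_assoc, mul_one, h,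
    mul_smul_comm, smul_mul_assoc]

lemma adj_eq (X : M) : X.adjugate = X.trace • (1 : M) - X := by
  rw [Matrix.adjugate_fin_two]
  ext i j
  fin_cases i <;> fin_cases j <;>
    simp [Matrix.trace_fin_two, Matrix.one_apply]

end Aux

section MatId

variable {R : Type*} [CommRing R]

/-- X + τXτ = (tr X)•1 + (tr (Xτ))•τ for τ = [[0,1],[1,0]]. -/
lemma tau_avg (X : Matrix (Fin 2) (Fin 2) R) :
    X + !![0,1;1,0] * X * !![0,1;1,0]
      = X.trace • (1 : Matrix (Fin 2) (Fin 2) R) + (X * !![0,1;1,0]).trace • !![0,1;1,0] := by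
  ext i j
  fin_cases i <;> fin_cases j <;>
    simp [Matrix.mul_apply, Fin.sum_univ_two, Matrix.trace_fin_two, Matrix.one_apply,
      Matrix.vecMul, dotProduct] <;> ring

lemma tau_sq : (!![0,1;1,0] : Matrix (Fin 2) (Fin 2) R) * !![0,1;1,0] = 1 := by
  ext i j
  fin_cases i <;> fin_cases j <;>
    simp [Matrix.mul_apply, Fin.sum_univ_two, Matrix.one_apply]

/-- Sum of four conjugates is a scalar. -/
lemma four_conj (A U U' : Matrix (Fin 2) (Fin 2) R)
    (hU : U * U' = 1) (h'U : U' * U = 1)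
    (hanti : U * !![0,1;1,0] = -(!![0,1;1,0] * U)) :
    A + !![0,1;1,0] * A * !![0,1;1,0] + U * A * U'
        + (!![0,1;1,0] * U) * A * (U' * !![0,1;1,0])
      = (2 * A.trace) • (1 : Matrix (Fin 2) (Fin 2) R) := by
  set τ : Matrix (Fin 2) (Fin 2) R := !![0,1;1,0] with hτ
  have hanti' : U' * τ = -(τ * U') := by
    have h1 : U' * (U * τ) * U' = U' * (-(τ * U)) * U' := by rw [hanti]
    have h2 : τ * U' = -(U' * τ) := by
      calc τ * U' = U' * U * τ * U' := by rw [h'U, one_mul]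
        _ = U' * (U * τ) * U' := by noncomm_ring
        _ = U' * (-(τ * U)) * U' := h1
        _ = -(U' * τ * (U * U')) := by noncomm_ring
        _ = -(U' * τ) := by rw [hU, mul_one]
    rw [h2, neg_neg]
  have key1 := tau_avg (R := R) A
  have key2 := tau_avg (R := R) (U * A * U')
  rw [← hτ] at key1 key2
  have htr2 : (U * A * U').trace = A.trace := by
    rw [Matrix.trace_mul_cycle, h'U, one_mul]
  have htr3 : (U * A * U' * τ).trace = -((A * τ).trace) := by
    have h5 : U * A * U' * τ = -(U * (A * τ) * U') := by
      rw [mul_assoc (U*A), hanti']; noncomm_ring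
    rw [h5, Matrix.trace_neg, Matrix.trace_mul_comm (U * (A * τ)) U', ← mul_assoc, h'U, one_mul]
  have expand : τ * U * A * (U' * τ) = τ * (U * A * U') * τ := by noncomm_ring
  calc A + τ * A * τ + U * A * U' + τ * U * A * (U' * τ)
      = (A + τ * A * τ) + ((U * A * U') + τ * (U * A * U') * τ) := by rw [expand]; noncomm_ring
    _ = A.trace • 1 + (A * τ).trace • τ
        + ((U*A*U').trace • 1 + ((U*A*U') * τ).trace • τ) := by rw [key1, key2]
    _ = (2 * A.trace) • 1 := by
        rw [htr2, htr3, neg_smul]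
        module

/-- four-fold product expansion -/
lemma four_prod (μ x : R) (B₁ B₂ B₃ B₄ : Matrix (Fin 2) (Fin 2) R) :
    (μ • 1 + x • B₁) * (μ • 1 + x • B₂) * (μ • 1 + x • B₃) * (μ • 1 + x • B₄)
      = μ^4 • (1 : Matrix (Fin 2) (Fin 2) R) + x • (μ^3 • (B₁ + B₂ + B₃ + B₄)
          + x • (μ^2 • (B₁*B₂ + B₁*B₃ + B₂*B₃ + B₁*B₄ + B₂*B₄ + B₃*B₄)
            + x • (μ • (B₁*B₂*B₃ + B₁*B₂*B₄ + B₁*B₃*B₄ + B₂*B₃*B₄)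
              + x • (B₁*B₂*B₃*B₄)))) := by
  simp only [mul_add, add_mul, smul_mul_assoc, mul_smul_comm, smul_smul, mul_one, one_mul,
    smul_add]
  module

/-- determinant of scalar plus correction, 2x2 -/
lemma det_scalar_plus (c y : R) (D : Matrix (Fin 2) (Fin 2) R) :
    (c • (1 : Matrix (Fin 2) (Fin 2) R) + y • D).det
      = c^2 + y * (c * D.trace + y * (D 0 0 * D 1 1 - D 0 1 * D 1 0)) := by
  simp [Matrix.det_fin_two, Matrix.one_apply, Matrix.trace_fin_two]
  ring

end MatId


section Steps

variable {ℓ : ℕ} [Fact (Nat.Prime ℓ)]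

local notation "M" => Matrix (Fin 2) (Fin 2) ℤ_[ℓ]
local notation "Mz" => Matrix (Fin 2) (Fin 2) (ZMod ℓ)
local notation "π" => piM (ℓ := ℓ)

lemma red_coe (g : GL (Fin 2) ℤ_[ℓ]) : ((redGL ℓ g : GL (Fin 2) (ZMod ℓ)) : Mz) = π (g : M) :=
  rfl

/-- elements of the principal congruence subgroup with prescribed determinant -/
lemma step1 (G : Subgroup (GL (Fin 2) ℤ_[ℓ]))
    (hdet : ∀ u : ℤ_[ℓ]ˣ, ∃ g ∈ G, ((g : M)).det = u)
    (hord : ¬ ℓ ∣ Nat.card (Subgroup.map (redGL ℓ) G)) :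
    ∀ lam : ℤ_[ℓ], (ℓ : ℤ_[ℓ]) ∣ lam - 1 →
      ∃ g ∈ G, redGL ℓ g = 1 ∧ ((g : M)).det = lam := by
  intro lam hlam
  haveI : NeZero ℓ := ⟨(Fact.out : Nat.Prime ℓ).ne_zero⟩
  obtain ⟨α, hαk, hα1⟩ := exists_root hord hlam
  have hαu : IsUnit α := by
    apply isUnit_of_not_dvd
    intro hd
    have h1 : (ℓ : ℤ_[ℓ]) ∣ 1 := by simpa using dvd_sub hd hα1
    have := PadicInt.isUnit_iff.mp (isUnit_of_dvd_one h1)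
    rw [PadicInt.norm_p] at this
    have h2 : (1:ℝ) < (ℓ:ℝ) := by
      exact_mod_cast (Fact.out : Nat.Prime ℓ).one_lt
    have : (ℓ:ℝ)⁻¹ < 1 := by
      rw [inv_lt_one_iff₀]; right; exact h2
    simp_all
  obtain ⟨g₀, hg₀G, hg₀det⟩ := hdet hαu.unit
  set m := Nat.card (Subgroup.map (redGL ℓ) G) with hm
  refine ⟨g₀ ^ m, pow_mem hg₀G m, ?_, ?_⟩
  · have hx : (⟨redGL ℓ g₀, Subgroup.mem_map_of_mem _ hg₀G⟩ :
        Subgroup.map (redGL ℓ) G) ^ m = 1 := pow_card_eq_one'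
    have := congrArg (Subtype.val) hx
    simp only [SubmonoidClass.coe_pow, OneMemClass.coe_one] at this
    rw [map_pow, this]
  · rw [Units.val_pow_eq_pow_val, Matrix.det_pow, hg₀det, hαu.unit_spec, hαk]

end Steps

section Core

variable {ℓ : ℕ} [Fact (Nat.Prime ℓ)]

local notation "M" => Matrix (Fin 2) (Fin 2) ℤ_[ℓ]
local notation "Mz" => Matrix (Fin 2) (Fin 2) (ZMod ℓ)
local notation "π" => piM (ℓ := ℓ)

set_option maxHeartbeats 1600000 in
lemma core (hℓ : 2 < ℓ)
    (G : Subgroup (GL (Fin 2) ℤ_[ℓ]))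
    (hdet : ∀ u : ℤ_[ℓ]ˣ, ∃ g ∈ G, ((g : M)).det = u)
    (hord : ¬ ℓ ∣ Nat.card (Subgroup.map (redGL ℓ) G))
    (τ : GL (Fin 2) (ZMod ℓ))
    (hτm : (τ : Mz) = !![0, 1; 1, 0])
    (hτ : τ ∈ Subgroup.map (redGL ℓ) G)
    (u : GL (Fin 2) (ZMod ℓ)) (hu : u ∈ Subgroup.map (redGL ℓ) G)
    (hanti : (u : Mz) * (τ : Mz) = -((τ : Mz) * (u : Mz))) :
    ∀ (N : ℕ) (μ : ℤ_[ℓ]), (ℓ : ℤ_[ℓ]) ∣ μ - 1 →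
      ∃ g ∈ G, ((g : M)).det = μ^2 ∧
        ∃ A : M, (g : M) = μ • 1 + ((ℓ : ℤ_[ℓ])^(N+1)) • A := by
  have hτsq : ((τ : Mz)) * ((τ : Mz)) = 1 := by rw [hτm]; exact tau_sq
  intro N
  induction N with
  | zero =>
    intro μ h
    have hsq : (ℓ : ℤ_[ℓ]) ∣ μ^2 - 1 := by
      have := h.mul_right (μ + 1)
      rwa [show (μ - 1) * (μ + 1) = μ^2 - 1 by ring] at this
    obtain ⟨g, hgG, hgred, hgdet⟩ := step1 G hdet hord (μ^2) hsq
    have h1 : π (g : M) = π (1 : M) := by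
      have := congrArg (Units.val) hgred
      rw [red_coe] at this
      simpa using this
    obtain ⟨A₀, hA₀⟩ := pi_lift h1
    obtain ⟨e, he⟩ := h
    have hμ : μ = 1 + (ℓ : ℤ_[ℓ]) * e := by linear_combination he
    refine ⟨g, hgG, hgdet, A₀ - e • 1, ?_⟩
    rw [hA₀, hμ]
    module
  | succ N IH =>
    intro μ h
    have h4 : ¬ ℓ ∣ 4 := by
      intro hd
      have h2 : ℓ ∣ 2 := Nat.Prime.dvd_of_dvd_pow (Fact.out) (show ℓ ∣ 2^2 by norm_num; exact hd)
      have := (Nat.prime_dvd_prime_iff_eq (Fact.out) Nat.prime_two).mp h2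
      omega
    obtain ⟨ν, hν4, hν1⟩ := exists_root h4 h
    obtain ⟨g, hgG, hgdet, A, hgm⟩ := IH ν hν1
    obtain ⟨t, htG, hts⟩ := Subgroup.mem_map.mp hτ
    obtain ⟨v, hvG, hvs⟩ := Subgroup.mem_map.mp hu
    set x : ℤ_[ℓ] := (ℓ : ℤ_[ℓ])^(N+1) with hx
    -- matrix-level identities for the lifts
    have hTT' : (t : M) * ((t⁻¹ : GL (Fin 2) ℤ_[ℓ]) : M) = 1 := Units.mul_inv t
    have hVV' : (v : M) * ((v⁻¹ : GL (Fin 2) ℤ_[ℓ]) : M) = 1 := Units.mul_inv v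
    have hWW' : ((t*v : GL (Fin 2) ℤ_[ℓ]) : M) * (((t*v)⁻¹ : GL (Fin 2) ℤ_[ℓ]) : M) = 1 :=
      Units.mul_inv (t*v)
    set B₁ : M := A with hB₁
    set B₂ : M := (t : M) * A * ((t⁻¹ : GL (Fin 2) ℤ_[ℓ]) : M) with hB₂
    set B₃ : M := (v : M) * A * ((v⁻¹ : GL (Fin 2) ℤ_[ℓ]) : M) with hB₃
    set B₄ : M := ((t*v : GL (Fin 2) ℤ_[ℓ]) : M) * A * (((t*v)⁻¹ : GL (Fin 2) ℤ_[ℓ]) : M) with hB₄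
    set P : GL (Fin 2) ℤ_[ℓ] := g * (t * g * t⁻¹) * (v * g * v⁻¹) * ((t*v) * g * (t*v)⁻¹)
      with hP
    have hPG : P ∈ G := by
      apply mul_mem (mul_mem (mul_mem hgG (mul_mem (mul_mem htG hgG) (inv_mem htG)))
        (mul_mem (mul_mem hvG hgG) (inv_mem hvG)))
      exact mul_mem (mul_mem (mul_mem htG hvG) hgG) (inv_mem (mul_mem htG hvG))
    -- the matrix of P
    have e2 : ((t * g * t⁻¹ : GL (Fin 2) ℤ_[ℓ]) : M) = ν • 1 + x • B₂ := by
      rw [Units.val_mul, Units.val_mul, hgm, hB₂]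
      exact conj_form _ _ _ hTT' ν x
    have e3 : ((v * g * v⁻¹ : GL (Fin 2) ℤ_[ℓ]) : M) = ν • 1 + x • B₃ := by
      rw [Units.val_mul, Units.val_mul, hgm, hB₃]
      exact conj_form _ _ _ hVV' ν x
    have e4 : (((t*v) * g * (t*v)⁻¹ : GL (Fin 2) ℤ_[ℓ]) : M) = ν • 1 + x • B₄ := by
      rw [Units.val_mul, Units.val_mul, hgm, hB₄]
      exact conj_form _ _ _ hWW' ν x
    have hPm : (P : M) = (ν • 1 + x • B₁) * (ν • 1 + x • B₂) * (ν • 1 + x • B₃)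
        * (ν • 1 + x • B₄) := by
      rw [hP, Units.val_mul, Units.val_mul, Units.val_mul, e2, e3, e4, hgm, hB₁]
    -- expand the product
    set S : M := ν^3 • (B₁ + B₂ + B₃ + B₄)
          + x • (ν^2 • (B₁*B₂ + B₁*B₃ + B₂*B₃ + B₁*B₄ + B₂*B₄ + B₃*B₄)
            + x • (ν • (B₁*B₂*B₃ + B₁*B₂*B₄ + B₁*B₃*B₄ + B₂*B₃*B₄)
              + x • (B₁*B₂*B₃*B₄))) with hS
    have hPm2 : (P : M) = ν^4 • 1 + x • S := by rw [hPm, hS]; exact four_prod ν x B₁ B₂ B₃ B₄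
    -- reduction of S mod ℓ
    have hπT : π (t : M) = (τ : Mz) := by rw [← red_coe, hts]
    have hπV : π (v : M) = (u : Mz) := by rw [← red_coe, hvs]
    have hπT' : π ((t⁻¹ : GL (Fin 2) ℤ_[ℓ]) : M) = (τ : Mz) := by
      have h1 : (τ : Mz) * π ((t⁻¹ : GL (Fin 2) ℤ_[ℓ]) : M) = 1 := by
        rw [← hπT, ← _root_.map_mul, hTT', _root_.map_one]
      calc π ((t⁻¹ : GL (Fin 2) ℤ_[ℓ]) : M)
          = ((τ : Mz) * (τ : Mz)) * π ((t⁻¹ : GL (Fin 2) ℤ_[ℓ]) : M) := by rw [hτsq, one_mul]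
        _ = (τ : Mz) * ((τ : Mz) * π ((t⁻¹ : GL (Fin 2) ℤ_[ℓ]) : M)) := by rw [mul_assoc]
        _ = (τ : Mz) := by rw [h1, mul_one]
    have hπVV' : (u : Mz) * π ((v⁻¹ : GL (Fin 2) ℤ_[ℓ]) : M) = 1 := by
      rw [← hπV, ← _root_.map_mul, hVV', _root_.map_one]
    have hπV'V : π ((v⁻¹ : GL (Fin 2) ℤ_[ℓ]) : M) * (u : Mz) = 1 := by
      rw [← hπV, ← _root_.map_mul, Units.inv_mul, _root_.map_one]
    have hπW : π ((t*v : GL (Fin 2) ℤ_[ℓ]) : M) = (τ : Mz) * (u : Mz) := by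
      rw [Units.val_mul, _root_.map_mul, hπT, hπV]
    have hπW' : π (((t*v)⁻¹ : GL (Fin 2) ℤ_[ℓ]) : M)
        = π ((v⁻¹ : GL (Fin 2) ℤ_[ℓ]) : M) * (τ : Mz) := by
      rw [_root_.mul_inv_rev, Units.val_mul, _root_.map_mul, hπT']
    -- sum of conjugates mod ℓ
    have hsum : π B₁ + π B₂ + π B₃ + π B₄ = (2 * (π A).trace) • (1 : Mz) := by
      rw [hB₁, hB₂, hB₃, hB₄]
      simp only [_root_.map_mul, hπT, hπT', hπV, hπW, hπW']
      have := four_conj (R := ZMod ℓ) (π A) (u : Mz) (π ((v⁻¹ : GL (Fin 2) ℤ_[ℓ]) : M))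
        hπVV' hπV'V (by rw [← hτm]; exact hanti)
      rw [← hτm] at this
      rw [← this]
    -- π S is a scalar matrix
    set c : ℤ_[ℓ] := ν^3 * (2 * A.trace) with hc
    have hπS : π S = π (c • (1 : M)) := by
      rw [hS, map_add]
      have hz : π (x • (ν ^ 2 • (B₁*B₂ + B₁*B₃ + B₂*B₃ + B₁*B₄ + B₂*B₄ + B₃*B₄)
            + x • (ν • (B₁*B₂*B₃ + B₁*B₂*B₄ + B₁*B₃*B₄ + B₂*B₃*B₄)
              + x • (B₁*B₂*B₃*B₄)))) = 0 := by
        rw [hx]; exact pi_pow_smul N _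
      rw [hz, add_zero, pi_smul, map_add, map_add, map_add, hsum, pi_smul, _root_.map_one,
        smul_smul]
      congr 1
      rw [hc, _root_.map_mul, _root_.map_mul, pi_trace, map_ofNat]
    obtain ⟨Dp, hDp⟩ := pi_lift hπS
    set y : ℤ_[ℓ] := (ℓ : ℤ_[ℓ])^(N+1+1) with hy
    set κ : ℤ_[ℓ] := ν^4 + x * c with hκ
    have hPm3 : (P : M) = κ • 1 + y • Dp := by
      rw [hPm2, hDp, hκ, hx, hy]
      module
    -- determinant of P
    have hconjdet : ∀ a : GL (Fin 2) ℤ_[ℓ], ((↑(a * g * a⁻¹) : M)).det = ν^2 := by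
      intro a
      have h1 : ((a : M)).det * (((a⁻¹ : GL (Fin 2) ℤ_[ℓ]) : M)).det = 1 := by
        rw [← Matrix.det_mul, Units.mul_inv, Matrix.det_one]
      rw [Units.val_mul, Units.val_mul, Matrix.det_mul, Matrix.det_mul, hgdet]
      linear_combination (ν^2) * h1
    have hPdet : ((P : M)).det = ν^8 := by
      rw [hP, Units.val_mul, Units.val_mul, Units.val_mul, Matrix.det_mul, Matrix.det_mul,
        Matrix.det_mul, hgdet, hconjdet t, hconjdet v, hconjdet (t*v)]
      ring
    -- κ ≡ ν⁴ mod ℓ^{N+2}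
    have hdet2 := det_scalar_plus κ y Dp
    rw [← hPm3, hPdet] at hdet2
    have hunit : IsUnit (κ + ν^4) := by
      apply isUnit_of_dvd_sub (c := 2)
      · have hee : κ + ν^4 - ((2:ℕ) : ℤ_[ℓ])
            = (ν-1)*(2*(ν^3+ν^2+ν+1)) + (ℓ:ℤ_[ℓ])*((ℓ:ℤ_[ℓ])^N*c) := by
          rw [hκ, hx]; push_cast; ring
        rw [hee]
        exact dvd_add (Dvd.dvd.mul_right hν1 _) (dvd_mul_right _ _)
      · intro hd
        have := Nat.le_of_dvd (by norm_num) hd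
        omega
    have hdvd : y ∣ κ - ν^4 := by
      have h8 : (κ - ν^4) * (κ + ν^4)
          = y * (-(κ * Dp.trace + y * (Dp 0 0 * Dp 1 1 - Dp 0 1 * Dp 1 0))) := by
        linear_combination -hdet2
      have h9 : y ∣ (κ - ν^4) * (κ + ν^4) := ⟨_, h8⟩
      exact (IsUnit.dvd_mul_right hunit).mp h9
    obtain ⟨e, he⟩ := hdvd
    refine ⟨P, hPG, ?_, Dp + e • 1, ?_⟩
    · rw [hPdet, ← hν4]; ring
    · rw [hPm3]
      have hκ2 : κ = μ + y * e := by rw [← hν4]; linear_combination he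
      rw [hκ2]
      module

end Core

section Final

variable {ℓ : ℕ} [Fact (Nat.Prime ℓ)]

local notation "M" => Matrix (Fin 2) (Fin 2) ℤ_[ℓ]

lemma mat_entry_tendsto (c : ℕ → ℤ_[ℓ]) :
    Filter.Tendsto (fun k : ℕ => (ℓ : ℤ_[ℓ])^(k+1) * c k) Filter.atTop (nhds 0) := by
  have hℓ1 : (1:ℝ) < (ℓ:ℝ) := by exact_mod_cast (Fact.out : Nat.Prime ℓ).one_lt
  apply squeeze_zero_norm (a := fun k : ℕ => ((ℓ:ℝ)⁻¹)^(k+1))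
  · intro k
    rw [norm_mul, norm_pow, PadicInt.norm_p]
    calc ((ℓ:ℝ)⁻¹)^(k+1) * ‖c k‖ ≤ ((ℓ:ℝ)⁻¹)^(k+1) * 1 := by
          apply mul_le_mul_of_nonneg_left (PadicInt.norm_le_one _)
          positivity
      _ = ((ℓ:ℝ)⁻¹)^(k+1) := mul_one _
  · have h0 : Filter.Tendsto (fun k : ℕ => ((ℓ:ℝ)⁻¹)^k) Filter.atTop (nhds 0) := by
      apply tendsto_pow_atTop_nhds_zero_of_lt_one
      · positivity
      · rw [inv_lt_one_iff₀]; right; exact hℓ1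
    exact h0.comp (Filter.tendsto_add_atTop_nat 1)

lemma mat_tendsto (L : M) (B : ℕ → M) :
    Filter.Tendsto (fun k : ℕ => L + (ℓ : ℤ_[ℓ])^(k+1) • B k) Filter.atTop (nhds L) := by
  refine tendsto_pi_nhds.mpr ?_
  intro i
  rw [tendsto_pi_nhds]
  intro j
  have : ∀ k : ℕ, (L + (ℓ : ℤ_[ℓ])^(k+1) • B k) i j = L i j + (ℓ : ℤ_[ℓ])^(k+1) * (B k i j) := by
    intro k; simp [Matrix.add_apply, Matrix.smul_apply, smul_eq_mul]
  rw [show nhds (L i j) = nhds (L i j + 0) by rw [add_zero]]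
  exact Filter.Tendsto.congr (fun k => (this k).symm)
    (Filter.Tendsto.add tendsto_const_nhds (mat_entry_tendsto fun k => B k i j))

end Final


/-- Let ℓ > 2 be prime, G a closed subgroup of GL_2(ℤ_ℓ) with surjective
determinant, whose mod-ℓ image G_ℓ has order prime to ℓ and contains
τ = [[0,1],[1,0]] as well as an element u anticommuting with τ. Then G
contains all scalars λ·Id with λ ≡ 1 (mod ℓ). -/
theorem stmt9 (ℓ : ℕ) [Fact (Nat.Prime ℓ)] (hℓ : 2 < ℓ)
    (G : Subgroup (GL (Fin 2) ℤ_[ℓ])) (hG : IsClosed (G : Set (GL (Fin 2) ℤ_[ℓ])))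
    (hdet : ∀ u : ℤ_[ℓ]ˣ, ∃ g ∈ G, ((g : Matrix (Fin 2) (Fin 2) ℤ_[ℓ])).det = u)
    (hord : ¬ ℓ ∣ Nat.card (Subgroup.map (redGL ℓ) G))
    (τ : GL (Fin 2) (ZMod ℓ))
    (hτm : (τ : Matrix (Fin 2) (Fin 2) (ZMod ℓ)) = !![0, 1; 1, 0])
    (hτ : τ ∈ Subgroup.map (redGL ℓ) G)
    (u : GL (Fin 2) (ZMod ℓ)) (hu : u ∈ Subgroup.map (redGL ℓ) G)
    (hanti : (u : Matrix (Fin 2) (Fin 2) (ZMod ℓ)) * (τ : Matrix (Fin 2) (Fin 2) (ZMod ℓ))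
      = -((τ : Matrix (Fin 2) (Fin 2) (ZMod ℓ)) * (u : Matrix (Fin 2) (Fin 2) (ZMod ℓ)))) :
    ∀ lam : ℤ_[ℓ], (ℓ : ℤ_[ℓ]) ∣ lam - 1 →
      ∃ g ∈ G, (g : Matrix (Fin 2) (Fin 2) ℤ_[ℓ]) = lam • (1 : Matrix (Fin 2) (Fin 2) ℤ_[ℓ]) := by
  intro lam hlam
  have hcore := core hℓ G hdet hord τ hτm hτ u hu hanti
  -- lam is a unit
  have hlu : IsUnit lam := isUnit_of_dvd_sub (c := 1) (by simpa using hlam)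
    (by intro hd; have := Nat.le_of_dvd one_pos hd; omega)
  set w : ℤ_[ℓ]ˣ := hlu.unit with hw
  have hwv : (w : ℤ_[ℓ]) = lam := hlu.unit_spec
  have hwl : ((w⁻¹ : ℤ_[ℓ]ˣ) : ℤ_[ℓ]) * lam = 1 := by rw [← hwv]; exact w.inv_mul
  -- the scalar matrix as a unit
  set U : GL (Fin 2) ℤ_[ℓ] :=
    ⟨lam • 1, ((w⁻¹ : ℤ_[ℓ]ˣ) : ℤ_[ℓ]) • 1, by
        rw [smul_mul_smul_comm, one_mul, mul_comm, hwl, one_smul], by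
        rw [smul_mul_smul_comm, one_mul, hwl, one_smul]⟩ with hU
  refine ⟨U, ?_, rfl⟩
  -- pick the approximating sequence
  choose seq hseqG hseqdet hseqA using fun n : ℕ => hcore n lam hlam
  choose A hA using hseqA
  -- inverse formula
  have hinv : ∀ n : ℕ, (((seq n)⁻¹ : GL (Fin 2) ℤ_[ℓ]) : Matrix (Fin 2) (Fin 2) ℤ_[ℓ])
      = ((w⁻¹ : ℤ_[ℓ]ˣ) : ℤ_[ℓ]) • 1
        + (ℓ : ℤ_[ℓ])^(n+1) • ((((w⁻¹ : ℤ_[ℓ]ˣ) : ℤ_[ℓ]) * ((w⁻¹ : ℤ_[ℓ]ˣ) : ℤ_[ℓ]))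
            • ((A n).trace • 1 - A n)) := by
    intro n
    set b : ℤ_[ℓ] := ((w⁻¹ : ℤ_[ℓ]ˣ) : ℤ_[ℓ]) with hb
    have hZ : ((seq n : GL (Fin 2) ℤ_[ℓ]) : Matrix (Fin 2) (Fin 2) ℤ_[ℓ]) * ((b * b) • (((seq n : GL (Fin 2) ℤ_[ℓ]) : Matrix (Fin 2) (Fin 2) ℤ_[ℓ])).adjugate) = 1 := by
      rw [mul_smul_comm, Matrix.mul_adjugate, hseqdet n, smul_smul]
      rw [show b * b * lam^2 = (b * lam) * (b * lam) by ring, hwl, one_mul, one_smul]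
    have huniq : (((seq n)⁻¹ : GL (Fin 2) ℤ_[ℓ]) : Matrix (Fin 2) (Fin 2) ℤ_[ℓ])
        = (b * b) • (((seq n : GL (Fin 2) ℤ_[ℓ]) : Matrix (Fin 2) (Fin 2) ℤ_[ℓ])).adjugate := by
      calc (((seq n)⁻¹ : GL (Fin 2) ℤ_[ℓ]) : Matrix (Fin 2) (Fin 2) ℤ_[ℓ])
          = (((seq n)⁻¹ : GL (Fin 2) ℤ_[ℓ]) : Matrix (Fin 2) (Fin 2) ℤ_[ℓ])
            * (((seq n : GL (Fin 2) ℤ_[ℓ]) : Matrix (Fin 2) (Fin 2) ℤ_[ℓ]) * ((b*b) • (((seq n : GL (Fin 2) ℤ_[ℓ]) : Matrix (Fin 2) (Fin 2) ℤ_[ℓ])).adjugate)) := by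
            rw [hZ, mul_one]
        _ = ((((seq n)⁻¹ : GL (Fin 2) ℤ_[ℓ]) : Matrix (Fin 2) (Fin 2) ℤ_[ℓ]) * ((seq n : GL (Fin 2) ℤ_[ℓ]) : Matrix (Fin 2) (Fin 2) ℤ_[ℓ]))
            * ((b*b) • (((seq n : GL (Fin 2) ℤ_[ℓ]) : Matrix (Fin 2) (Fin 2) ℤ_[ℓ])).adjugate) := by rw [mul_assoc]
        _ = (b * b) • (((seq n : GL (Fin 2) ℤ_[ℓ]) : Matrix (Fin 2) (Fin 2) ℤ_[ℓ])).adjugate := by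
            rw [Units.inv_mul, one_mul]
    rw [huniq, adj_eq, hA n]
    have htr : (lam • (1:Matrix (Fin 2) (Fin 2) ℤ_[ℓ]) + (ℓ : ℤ_[ℓ])^(n+1) • A n).trace
        = 2 * lam + (ℓ : ℤ_[ℓ])^(n+1) * (A n).trace := by
      rw [Matrix.trace_add, Matrix.trace_smul, Matrix.trace_smul, Matrix.trace_one]
      simp only [Fintype.card_fin, smul_eq_mul, Nat.cast_ofNat]
      ring
    rw [htr]
    have hbb : b * b * lam = b := by
      have : b * (b * lam) = b * 1 := by rw [hwl]
      rw [mul_one] at this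
      linear_combination this
    match_scalars
    · linear_combination hbb
    · ring
  -- membership via closedness
  have hmem : (U : GL (Fin 2) ℤ_[ℓ]) ∈ closure (G : Set (GL (Fin 2) ℤ_[ℓ])) := by
    apply mem_closure_of_tendsto (f := seq) (b := Filter.atTop)
    · rw [Units.isInducing_embedProduct.tendsto_nhds_iff]
      apply Filter.Tendsto.prodMk_nhds
      · have h1 : Filter.Tendsto (fun n : ℕ => ((seq n : GL (Fin 2) ℤ_[ℓ]) : Matrix (Fin 2) (Fin 2) ℤ_[ℓ]))
            Filter.atTop (nhds (lam • 1)) := by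
          apply Filter.Tendsto.congr (f₁ := fun n : ℕ => lam • (1:Matrix (Fin 2) (Fin 2) ℤ_[ℓ]) + (ℓ : ℤ_[ℓ])^(n+1) • A n)
          · exact fun n => (hA n).symm
          · exact mat_tendsto _ _
        exact h1
      · have h2 : Filter.Tendsto (fun n : ℕ => (((seq n)⁻¹ : GL (Fin 2) ℤ_[ℓ]) : Matrix (Fin 2) (Fin 2) ℤ_[ℓ]))
            Filter.atTop (nhds (((w⁻¹ : ℤ_[ℓ]ˣ) : ℤ_[ℓ]) • 1)) := by
          apply Filter.Tendsto.congr
            (f₁ := fun n : ℕ => ((w⁻¹ : ℤ_[ℓ]ˣ) : ℤ_[ℓ]) • (1:Matrix (Fin 2) (Fin 2) ℤ_[ℓ])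
              + (ℓ : ℤ_[ℓ])^(n+1) • ((((w⁻¹ : ℤ_[ℓ]ˣ) : ℤ_[ℓ]) * ((w⁻¹ : ℤ_[ℓ]ˣ) : ℤ_[ℓ]))
                • ((A n).trace • 1 - A n)))
          · exact fun n => (hinv n).symm
          · exact mat_tendsto _ _
        exact (MulOpposite.continuous_op.tendsto _).comp h2
    · exact Filter.Eventually.of_forall fun n => hseqG n
  rwa [hG.closure_eq] at hmem
end

section
/- (Sah's Lemma) Let G be a profinite group, M a continuous G-module, and g an element of the center of G. Then the endomorphism x ↦ g·x − x of M induces the zero map on H¹(G, M). In particular, if x ↦ g·x − x is an automorphism of M, then H¹(G, M) = 0. -/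
/-- Sah's Lemma: if g is central in G and M is a G-module, then x ↦ g·x - x
induces the zero map on H¹(G, M) (stated at the level of 1-cocycles: for any
cocycle f, the cocycle a ↦ g·f(a) - f(a) is a coboundary); in particular if
x ↦ g·x - x is bijective then every 1-cocycle is a coboundary, i.e. H¹(G,M)=0. -/
theorem stmt11 {G : Type*} [Group G] {M : Type*} [AddCommGroup M]
    [DistribMulAction G M] (g : G) (hg : g ∈ Subgroup.center G)
    (f : G → M) (hf : ∀ a b : G, f (a * b) = f a + a • f b) :
    (∃ m : M, ∀ a : G, g • f a - f a = a • m - m) ∧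
      (Function.Bijective (fun x : M => g • x - x) →
        ∃ m : M, ∀ a : G, f a = a • m - m) := by
  rw [Subgroup.mem_center_iff] at hg
  have key : ∀ a : G, g • f a - f a = a • f g - f g := by
    intro a
    have h1 : f (g * a) = f g + g • f a := hf g a
    have h2 : f (a * g) = f a + a • f g := hf a g
    rw [hg a] at h2
    rw [h1] at h2
    rw [sub_eq_sub_iff_add_eq_add, add_comm (g • f a), h2, add_comm]
  refine ⟨⟨f g, key⟩, fun hbij => ?_⟩
  obtain ⟨n, hn⟩ := hbij.2 (f g)
  simp only at hn
  refine ⟨n, fun a => hbij.1 ?_⟩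
  simp only
  have sw : a • g • n = g • a • n := by rw [smul_smul, smul_smul, hg a]
  calc g • f a - f a = a • f g - f g := key a
    _ = a • (g • n - n) - (g • n - n) := by rw [hn]
    _ = g • (a • n - n) - (a • n - n) := by
        rw [smul_sub, smul_sub, sw]; abel
end

section
/- Let G be a subgroup of GL_2(𝔽_13) with det(G) = 𝔽_13^× whose image in PGL_2(𝔽_13) is isomorphic to a subgroup of S_4 or of A_5. Then G contains a scalar matrix different from ±Id. -/
lemma stmt14_aux (G : Subgroup (GL (Fin 2) (ZMod 13))) (g : GL (Fin 2) (ZMod 13))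
    (hg : g ∈ G) (hdg : ((g : Matrix (Fin 2) (Fin 2) (ZMod 13))).det = 2) (n : ℕ)
    (hn : ∃ c : ZMod 13,
      ((g ^ n : GL (Fin 2) (ZMod 13)) : Matrix (Fin 2) (Fin 2) (ZMod 13)) = c • 1)
    (h1 : (2 : ZMod 13) ^ n ≠ 1) :
    ∃ g ∈ G, ∃ c : ZMod 13,
      (g : Matrix (Fin 2) (Fin 2) (ZMod 13)) = c • (1 : Matrix (Fin 2) (Fin 2) (ZMod 13)) ∧
      c ≠ 1 ∧ c ≠ -1 := by
  obtain ⟨c, hc⟩ := hn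
  have hd : (2 : ZMod 13) ^ n = c ^ 2 := by
    have := congrArg Matrix.det hc
    rw [Units.val_pow_eq_pow_val, Matrix.det_pow, hdg, Matrix.det_smul, Matrix.det_one] at this
    simpa using this
  refine ⟨g ^ n, pow_mem hg n, c, hc, ?_, ?_⟩ <;> rintro rfl <;> apply h1 <;>
    rw [hd] <;> ring

set_option maxRecDepth 100000 in
/-- Let G ≤ GL_2(𝔽₁₃) with surjective determinant whose image in PGL_2(𝔽₁₃)
(i.e. the quotient of G by its scalar elements) is isomorphic to a subgroup of
S₄ or of A₅. Then G contains a scalar matrix different from ±Id. -/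
theorem stmt14 (G : Subgroup (GL (Fin 2) (ZMod 13)))
    (hdet : ∀ u : (ZMod 13)ˣ, ∃ g ∈ G, ((g : Matrix (Fin 2) (Fin 2) (ZMod 13))).det = u)
    (hproj :
      (∃ φ : G →* Equiv.Perm (Fin 4), ∀ x : G, φ x = 1 ↔
        ∃ c : ZMod 13, ((x : GL (Fin 2) (ZMod 13)) : Matrix (Fin 2) (Fin 2) (ZMod 13)) = c • 1) ∨
      (∃ φ : G →* alternatingGroup (Fin 5), ∀ x : G, φ x = 1 ↔
        ∃ c : ZMod 13, ((x : GL (Fin 2) (ZMod 13)) : Matrix (Fin 2) (Fin 2) (ZMod 13)) = c • 1)) :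
    ∃ g ∈ G, ∃ c : ZMod 13,
      (g : Matrix (Fin 2) (Fin 2) (ZMod 13)) = c • (1 : Matrix (Fin 2) (Fin 2) (ZMod 13)) ∧
      c ≠ 1 ∧ c ≠ -1 := by
  obtain ⟨g, hg, hdg⟩ := hdet ⟨2, 7, by decide, by decide⟩
  set x : G := ⟨g, hg⟩ with hx
  rcases hproj with ⟨φ, hφ⟩ | ⟨φ, hφ⟩
  · have hord : ∀ σ : Equiv.Perm (Fin 4), σ ^ 4 = 1 ∨ σ ^ 3 = 1 := by decide
    rcases hord (φ x) with h | h
    · refine stmt14_aux G g hg hdg 4 ?_ (by decide)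
      have := (hφ (x ^ 4)).mp (by rw [map_pow, h])
      simpa using this
    · refine stmt14_aux G g hg hdg 3 ?_ (by decide)
      have := (hφ (x ^ 3)).mp (by rw [map_pow, h])
      simpa using this
  · have hord : ∀ σ : alternatingGroup (Fin 5), σ ^ 5 = 1 ∨ σ ^ 4 = 1 ∨ σ ^ 3 = 1 := by decide
    rcases hord (φ x) with h | h | h
    · refine stmt14_aux G g hg hdg 5 ?_ (by decide)
      have := (hφ (x ^ 5)).mp (by rw [map_pow, h])
      simpa using this
    · refine stmt14_aux G g hg hdg 4 ?_ (by decide)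
      have := (hφ (x ^ 4)).mp (by rw [map_pow, h])
      simpa using this
    · refine stmt14_aux G g hg hdg 3 ?_ (by decide)
      have := (hφ (x ^ 3)).mp (by rw [map_pow, h])
      simpa using this
end

section
/- Let p be an odd prime, H a p-subgroup of GL_2(ℤ/p^nℤ) stable under conjugation by C = [[1,0],[0,−1]], and M ∈ H. Define M_0 = M and M_{i+1} = M_i · C M_i C^{-1}. Then: (1) det(M_i) generates the same subgroup of (ℤ/p^nℤ)^× as det(M) for all i; (2) writing M_i = λ_i·Id + D_i + A_i with D_i diagonal traceless and A_i antidiagonal, there is a unit μ_i with D_i = μ_i D_0; (3) M_i is diagonal for all i ≥ n. -/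
open Matrix

lemma auxRec {R : Type*} [CommRing R] (N : Matrix (Fin 2) (Fin 2) R) :
    N * !![1,0;0,-1] * N * !![1,0;0,-1] =
      !![N 0 0 * N 0 0 - N 0 1 * N 1 0, N 0 1 * (N 1 1 - N 0 0);
         N 1 0 * (N 0 0 - N 1 1), N 1 1 * N 1 1 - N 0 1 * N 1 0] := by
  ext i j
  fin_cases i <;> fin_cases j <;>
    simp [Matrix.mul_apply, Fin.sum_univ_two] <;> ring

lemma auxZpowers {G : Type*} [Group G] (x : G) (r : ℕ) (hodd : Odd r)
    (hx : x ^ r = 1) (i : ℕ) :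
    Subgroup.zpowers (x ^ 2 ^ i) = Subgroup.zpowers x := by
  rcases eq_or_lt_of_le (Nat.one_le_iff_ne_zero.mpr hodd.pos.ne') with h1 | h1
  · have hx1 : x = 1 := by rw [← pow_one x, h1, hx]
    simp [hx1]
  · have hcop : Nat.Coprime r (2 ^ i) :=
      Nat.Coprime.pow_right _ (Nat.coprime_two_right.mpr hodd)
    obtain ⟨k, -, hk⟩ := Nat.exists_mul_mod_eq_one_of_coprime hcop.symm h1
    apply le_antisymm
    · exact Subgroup.zpowers_le.mpr (Subgroup.npow_mem_zpowers x (2 ^ i))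
    · apply Subgroup.zpowers_le.mpr
      have key : (x ^ 2 ^ i) ^ k = x := by
        rw [← pow_mul]
        conv_lhs => rw [← Nat.mod_add_div (2 ^ i * k) r]
        rw [pow_add, hk, pow_one, pow_mul, hx, one_pow, mul_one]
      have h := Subgroup.npow_mem_zpowers (x ^ 2 ^ i) k
      rwa [key] at h

lemma auxDvd (p n : ℕ) (hp : p.Prime) (hn : 0 < n) (x : ZMod (p ^ n))
    (h : ZMod.castHom (dvd_pow_self p hn.ne') (ZMod p) x = 0) :
    ∃ s : ZMod (p ^ n), x = p * s := by
  haveI : NeZero (p ^ n) := ⟨pow_ne_zero _ hp.pos.ne'⟩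
  have hv : ((x.val : ℕ) : ZMod p) = 0 := by
    rwa [ZMod.natCast_val, ← ZMod.castHom_apply (h := dvd_pow_self p hn.ne')]
  obtain ⟨m, hm⟩ := (ZMod.natCast_eq_zero_iff _ _).mp hv
  refine ⟨(m : ZMod (p ^ n)), ?_⟩
  have : ((x.val : ℕ) : ZMod (p ^ n)) = x := by
    rw [ZMod.natCast_val, ZMod.cast_id]
  rw [← this, hm]
  push_cast
  ring

lemma auxUnit (p n : ℕ) (hp : p.Prime) (hn : 0 < n) (x : ZMod (p ^ n))
    (h : ZMod.castHom (dvd_pow_self p hn.ne') (ZMod p) x ≠ 0) : IsUnit x := by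
  haveI : NeZero (p ^ n) := ⟨pow_ne_zero _ hp.pos.ne'⟩
  have hv : ((x.val : ℕ) : ZMod (p ^ n)) = x := by
    rw [ZMod.natCast_val, ZMod.cast_id]
  rw [← hv]
  rw [ZMod.isUnit_iff_coprime]
  apply Nat.Coprime.pow_right
  rw [Nat.coprime_comm]
  apply (Nat.Prime.coprime_iff_not_dvd hp).mpr
  intro hdvd
  apply h
  have : ((x.val : ℕ) : ZMod p) = 0 := (ZMod.natCast_eq_zero_iff _ _).mpr hdvd
  rwa [ZMod.natCast_val, ← ZMod.castHom_apply (h := dvd_pow_self p hn.ne')] at this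

lemma auxNil (p : ℕ) (hp : p.Prime) (m : ℕ)
    (g : Matrix (Fin 2) (Fin 2) (ZMod p)) (hg : g ^ p ^ m = 1) :
    g 0 0 + g 1 1 = 2 ∧ (g 0 0 - 1) * (g 1 1 - 1) - g 0 1 * g 1 0 = 0 := by
  haveI : Fact p.Prime := ⟨hp⟩
  have hnil : (g - 1) ^ p ^ m = 0 := by
    rw [sub_pow_char_pow_of_commute p m (Commute.one_right g), hg, one_pow, sub_self]
  have htr : Matrix.trace (g - 1) = 0 :=
    (Matrix.isNilpotent_trace_of_isNilpotent ⟨p ^ m, hnil⟩).eq_zero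
  have hdet : (g - 1).det = 0 := by
    have h0 : ((g - 1).det) ^ p ^ m = 0 := by
      rw [← Matrix.det_pow, hnil]; simp
    exact (pow_eq_zero_iff (pow_ne_zero m hp.pos.ne')).mp h0
  rw [Matrix.trace_fin_two] at htr
  rw [Matrix.det_fin_two] at hdet
  simp only [Matrix.sub_apply, Matrix.one_apply_eq, Matrix.one_apply_ne,
    Matrix.one_apply] at htr hdet
  constructor
  · linear_combination htr
  · norm_num at hdet
    linear_combination hdet

lemma auxField (p : ℕ) (hp : p.Prime) (hodd : p ≠ 2) (a b c d : ZMod p)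
    (h1 : a + d = 2) (h2 : (a - 1) * (d - 1) - b * c = 0)
    (h3 : (a * a - b * c) + (d * d - b * c) = 2) : a = 1 ∧ d = 1 := by
  haveI : Fact p.Prime := ⟨hp⟩
  have h2ne : (2 : ZMod p) ≠ 0 := by
    intro h
    have : ((2 : ℕ) : ZMod p) = 0 := by exact_mod_cast h
    have := (ZMod.natCast_eq_zero_iff 2 p).mp this
    exact hodd ((Nat.prime_dvd_prime_iff_eq hp Nat.prime_two).mp this)
  have h4 : (2 : ZMod p) * 2 * (a - 1) ^ 2 = 0 := by
    linear_combination h3 - 2 * h2 + (3 * a - d - 4) * h1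
  have ha : a - 1 = 0 := by
    have h4' : (a - 1) ^ 2 = 0 :=
      (mul_eq_zero.mp h4).resolve_left (mul_ne_zero h2ne h2ne)
    exact (pow_eq_zero_iff (by norm_num : (2 : ℕ) ≠ 0)).mp h4'
  constructor
  · linear_combination ha
  · linear_combination h1 - ha

set_option maxHeartbeats 1600000 in
/-- Key lemma on p-subgroups of GL_2(ℤ/p^nℤ) stable under conjugation by
C = [[1,0],[0,-1]]: for the iteration M₀ = M, M_{i+1} = M_i·C M_i C⁻¹ one has
(0) all M_i lie in H; (1) det M_i generates the same subgroup as det M;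
(2) writing M_i = λ_i·Id + D_i + A_i with D_i diagonal traceless and A_i
antidiagonal, D_i is a unit multiple of D₀; (3) M_i is diagonal for i ≥ n. -/
theorem stmt15 (p : ℕ) (hp : p.Prime) (hodd : p ≠ 2) (n : ℕ) (hn : 0 < n)
    (H : Subgroup (GL (Fin 2) (ZMod (p ^ n)))) (hH : IsPGroup p H)
    (C : GL (Fin 2) (ZMod (p ^ n)))
    (hC : (C : Matrix (Fin 2) (Fin 2) (ZMod (p ^ n))) = !![1, 0; 0, -1])
    (hstab : ∀ h ∈ H, C * h * C⁻¹ ∈ H)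
    (M : GL (Fin 2) (ZMod (p ^ n))) (hM : M ∈ H)
    (f : ℕ → GL (Fin 2) (ZMod (p ^ n))) (hf0 : f 0 = M)
    (hfs : ∀ i, f (i + 1) = f i * (C * f i * C⁻¹)) :
    (∀ i, f i ∈ H) ∧
    (∀ i, Subgroup.zpowers (Matrix.GeneralLinearGroup.det (f i)) =
      Subgroup.zpowers (Matrix.GeneralLinearGroup.det M)) ∧
    (∃ (lam : ℕ → ZMod (p ^ n)) (D A : ℕ → Matrix (Fin 2) (Fin 2) (ZMod (p ^ n))),
      (∀ i, ((f i : Matrix (Fin 2) (Fin 2) (ZMod (p ^ n)))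
          = lam i • 1 + D i + A i) ∧ (D i).IsDiag ∧ (D i).trace = 0 ∧
          (A i) 0 0 = 0 ∧ (A i) 1 1 = 0) ∧
      (∀ i, ∃ μ : (ZMod (p ^ n))ˣ, D i = (μ : ZMod (p ^ n)) • D 0)) ∧
    (∀ i, n ≤ i → ((f i : Matrix (Fin 2) (Fin 2) (ZMod (p ^ n)))).IsDiag) := by
  have hCm : (!![1,0;0,-1] : Matrix (Fin 2) (Fin 2) (ZMod (p ^ n))) *
      !![1,0;0,-1] = 1 := by
    ext i j
    fin_cases i <;> fin_cases j <;>
      simp [Matrix.mul_apply, Fin.sum_univ_two, Matrix.one_apply]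
  have hCinv : ((C⁻¹ : GL (Fin 2) (ZMod (p ^ n))) : Matrix (Fin 2) (Fin 2) (ZMod (p ^ n)))
      = !![1,0;0,-1] := by
    have h1 : C * C = 1 := Units.ext (by rw [Units.val_mul, hC, hCm, Units.val_one])
    rw [inv_eq_of_mul_eq_one_left h1, hC]
  -- (0) membership
  have hmem : ∀ i, f i ∈ H := by
    intro i
    induction i with
    | zero => rw [hf0]; exact hM
    | succ i ih => rw [hfs]; exact H.mul_mem ih (hstab _ ih)
  -- entry recursion
  have hrec : ∀ i, ((f (i + 1) : Matrix (Fin 2) (Fin 2) (ZMod (p ^ n))) : Matrix (Fin 2) (Fin 2) (ZMod (p ^ n)))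
      = !![(f i : Matrix (Fin 2) (Fin 2) (ZMod (p ^ n))) 0 0 * (f i : Matrix (Fin 2) (Fin 2) (ZMod (p ^ n))) 0 0 - (f i : Matrix (Fin 2) (Fin 2) (ZMod (p ^ n))) 0 1 * (f i : Matrix (Fin 2) (Fin 2) (ZMod (p ^ n))) 1 0,
           (f i : Matrix (Fin 2) (Fin 2) (ZMod (p ^ n))) 0 1 * ((f i : Matrix (Fin 2) (Fin 2) (ZMod (p ^ n))) 1 1 - (f i : Matrix (Fin 2) (Fin 2) (ZMod (p ^ n))) 0 0);
           (f i : Matrix (Fin 2) (Fin 2) (ZMod (p ^ n))) 1 0 * ((f i : Matrix (Fin 2) (Fin 2) (ZMod (p ^ n))) 0 0 - (f i : Matrix (Fin 2) (Fin 2) (ZMod (p ^ n))) 1 1),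
           (f i : Matrix (Fin 2) (Fin 2) (ZMod (p ^ n))) 1 1 * (f i : Matrix (Fin 2) (Fin 2) (ZMod (p ^ n))) 1 1 - (f i : Matrix (Fin 2) (Fin 2) (ZMod (p ^ n))) 0 1 * (f i : Matrix (Fin 2) (Fin 2) (ZMod (p ^ n))) 1 0] := by
    intro i
    rw [hfs i]
    simp only [Units.val_mul, hC, hCinv, ← mul_assoc]
    exact auxRec _
  -- mod p reduction
  set φ := ZMod.castHom (dvd_pow_self p hn.ne') (ZMod p) with hφ
  have powfact : ∀ g ∈ H, ∃ m : ℕ,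
      (φ.mapMatrix ((g : GL (Fin 2) (ZMod (p ^ n))) :
        Matrix (Fin 2) (Fin 2) (ZMod (p ^ n)))) ^ p ^ m = 1 := by
    intro g hg
    obtain ⟨m, hm⟩ := hH ⟨g, hg⟩
    refine ⟨m, ?_⟩
    have h1 : g ^ p ^ m = 1 := by simpa using congrArg Subtype.val hm
    have h2 : ((g : GL (Fin 2) (ZMod (p ^ n))) : Matrix (Fin 2) (Fin 2) (ZMod (p ^ n))) ^ p ^ m
        = 1 := by rw [← Units.val_pow_eq_pow_val, h1, Units.val_one]
    rw [← _root_.map_pow, h2, _root_.map_one]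
  have key : ∀ g, (hg : g ∈ H) →
      φ (((g : GL (Fin 2) (ZMod (p ^ n))) : Matrix (Fin 2) (Fin 2) (ZMod (p ^ n))) 0 0) = 1 ∧
      φ (((g : GL (Fin 2) (ZMod (p ^ n))) : Matrix (Fin 2) (Fin 2) (ZMod (p ^ n))) 1 1) = 1 := by
    intro g hg
    obtain ⟨m1, hm1⟩ := powfact g hg
    have e1 := auxNil p hp m1 _ hm1
    have hg2 : g * (C * g * C⁻¹) ∈ H := H.mul_mem hg (hstab g hg)
    obtain ⟨m2, hm2⟩ := powfact _ hg2
    have e2 := auxNil p hp m2 _ hm2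
    have hmat : ((g * (C * g * C⁻¹) : GL (Fin 2) (ZMod (p ^ n))) :
        Matrix (Fin 2) (Fin 2) (ZMod (p ^ n)))
        = !![(g : Matrix (Fin 2) (Fin 2) (ZMod (p ^ n))) 0 0 *
              (g : Matrix (Fin 2) (Fin 2) (ZMod (p ^ n))) 0 0 -
              (g : Matrix (Fin 2) (Fin 2) (ZMod (p ^ n))) 0 1 *
              (g : Matrix (Fin 2) (Fin 2) (ZMod (p ^ n))) 1 0,
             (g : Matrix (Fin 2) (Fin 2) (ZMod (p ^ n))) 0 1 *
              ((g : Matrix (Fin 2) (Fin 2) (ZMod (p ^ n))) 1 1 -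
               (g : Matrix (Fin 2) (Fin 2) (ZMod (p ^ n))) 0 0);
             (g : Matrix (Fin 2) (Fin 2) (ZMod (p ^ n))) 1 0 *
              ((g : Matrix (Fin 2) (Fin 2) (ZMod (p ^ n))) 0 0 -
               (g : Matrix (Fin 2) (Fin 2) (ZMod (p ^ n))) 1 1),
             (g : Matrix (Fin 2) (Fin 2) (ZMod (p ^ n))) 1 1 *
              (g : Matrix (Fin 2) (Fin 2) (ZMod (p ^ n))) 1 1 -
              (g : Matrix (Fin 2) (Fin 2) (ZMod (p ^ n))) 0 1 *
              (g : Matrix (Fin 2) (Fin 2) (ZMod (p ^ n))) 1 0] := by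
      simp only [Units.val_mul, hC, hCinv, ← mul_assoc]
      exact auxRec _
    rw [hmat] at e2
    simp only [RingHom.mapMatrix_apply, Matrix.map_apply] at e1 e2
    simp only [Matrix.of_apply, Matrix.cons_val', Matrix.cons_val_zero, Matrix.cons_val_one,
      Matrix.head_cons, Matrix.head_fin_const, Matrix.cons_val_fin_one,
      _root_.map_sub, _root_.map_mul] at e2
    exact auxField p hp hodd _ _ _ _ e1.1 e1.2 e2.1
  have htwo : (2 : ZMod p) ≠ 0 := by
    intro h
    have h2 : ((2 : ℕ) : ZMod p) = 0 := by exact_mod_cast h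
    have := (ZMod.natCast_eq_zero_iff 2 p).mp h2
    exact hodd ((Nat.prime_dvd_prime_iff_eq hp Nat.prime_two).mp this)
  have hsum : ∀ i, IsUnit ((f i : Matrix (Fin 2) (Fin 2) (ZMod (p ^ n))) 0 0 + (f i : Matrix (Fin 2) (Fin 2) (ZMod (p ^ n))) 1 1) := by
    intro i
    apply auxUnit p n hp hn
    rw [_root_.map_add, (key (f i) (hmem i)).1, (key (f i) (hmem i)).2]
    exact fun h => htwo (by rw [← h]; ring)
  have hdiff : ∀ i, ∃ s, (f i : Matrix (Fin 2) (Fin 2) (ZMod (p ^ n))) 0 0 - (f i : Matrix (Fin 2) (Fin 2) (ZMod (p ^ n))) 1 1 = p * s := by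
    intro i
    apply auxDvd p n hp hn
    rw [_root_.map_sub, (key (f i) (hmem i)).1, (key (f i) (hmem i)).2, sub_self]
  refine ⟨hmem, ?_, ?_, ?_⟩
  · -- determinants
    have hdetpow : ∀ i, Matrix.GeneralLinearGroup.det (f i)
        = Matrix.GeneralLinearGroup.det M ^ 2 ^ i := by
      intro i
      induction i with
      | zero => rw [hf0, pow_zero, pow_one]
      | succ i ih =>
        rw [hfs i, _root_.map_mul, _root_.map_mul, _root_.map_mul, _root_.map_inv, ih]
        have hc : ∀ x y : (ZMod (p ^ n))ˣ, y * x * y⁻¹ = x := fun x y => by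
          rw [mul_comm y x, mul_inv_cancel_right]
        rw [hc, ← pow_add]
        congr 1
        rw [pow_succ, Nat.mul_two]
    intro i
    rw [hdetpow i]
    obtain ⟨k, hk⟩ := hH ⟨M, hM⟩
    have h1 : M ^ p ^ k = 1 := by simpa using congrArg Subtype.val hk
    have h2 : Matrix.GeneralLinearGroup.det M ^ p ^ k = 1 := by
      rw [← _root_.map_pow, h1, _root_.map_one]
    exact auxZpowers _ (p ^ k) ((hp.odd_of_ne_two hodd).pow) h2 i
  · -- decomposition
    have h2u : IsUnit (2 : ZMod (p ^ n)) := by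
      apply auxUnit p n hp hn
      rw [_root_.map_ofNat]
      exact htwo
    obtain ⟨u2, hu2⟩ := h2u
    have h21 : (2 : ZMod (p ^ n)) * ↑u2⁻¹ = 1 := by rw [← hu2]; exact u2.mul_inv
    refine ⟨fun i => ((f i : Matrix (Fin 2) (Fin 2) (ZMod (p ^ n))) 0 0 + (f i : Matrix (Fin 2) (Fin 2) (ZMod (p ^ n))) 1 1) * ↑u2⁻¹,
      fun i => !![((f i : Matrix (Fin 2) (Fin 2) (ZMod (p ^ n))) 0 0 - (f i : Matrix (Fin 2) (Fin 2) (ZMod (p ^ n))) 1 1) * ↑u2⁻¹, 0;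
                  0, ((f i : Matrix (Fin 2) (Fin 2) (ZMod (p ^ n))) 1 1 - (f i : Matrix (Fin 2) (Fin 2) (ZMod (p ^ n))) 0 0) * ↑u2⁻¹],
      fun i => !![0, (f i : Matrix (Fin 2) (Fin 2) (ZMod (p ^ n))) 0 1; (f i : Matrix (Fin 2) (Fin 2) (ZMod (p ^ n))) 1 0, 0], ?_, ?_⟩
    · intro i
      refine ⟨?_, ?_, ?_, by simp, by simp⟩
      · ext j k
        fin_cases j <;> fin_cases k <;>
          simp [Matrix.one_apply, Matrix.smul_apply, smul_eq_mul] <;>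
          first
            | linear_combination (-((f i : Matrix (Fin 2) (Fin 2) (ZMod (p ^ n))) 0 0)) * h21
            | linear_combination (-((f i : Matrix (Fin 2) (Fin 2) (ZMod (p ^ n))) 1 1)) * h21
      · intro j k hjk
        fin_cases j <;> fin_cases k <;> simp_all
      · rw [Matrix.trace_fin_two]
        simp
        ring
    · -- unit multiple
      have hD : ∀ i, ∃ u : (ZMod (p ^ n))ˣ,
          (f i : Matrix (Fin 2) (Fin 2) (ZMod (p ^ n))) 0 0 - (f i : Matrix (Fin 2) (Fin 2) (ZMod (p ^ n))) 1 1 = ↑u * ((f 0 : Matrix (Fin 2) (Fin 2) (ZMod (p ^ n))) 0 0 - (f 0 : Matrix (Fin 2) (Fin 2) (ZMod (p ^ n))) 1 1) := by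
        intro i
        induction i with
        | zero => exact ⟨1, by simp⟩
        | succ i ih =>
          obtain ⟨u, hu⟩ := ih
          obtain ⟨v, hv⟩ := hsum i
          refine ⟨v * u, ?_⟩
          have ha : (f (i + 1) : Matrix (Fin 2) (Fin 2) (ZMod (p ^ n))) 0 0 = (f i : Matrix (Fin 2) (Fin 2) (ZMod (p ^ n))) 0 0 * (f i : Matrix (Fin 2) (Fin 2) (ZMod (p ^ n))) 0 0 - (f i : Matrix (Fin 2) (Fin 2) (ZMod (p ^ n))) 0 1 * (f i : Matrix (Fin 2) (Fin 2) (ZMod (p ^ n))) 1 0 := by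
            rw [hrec i]; simp
          have hd : (f (i + 1) : Matrix (Fin 2) (Fin 2) (ZMod (p ^ n))) 1 1 = (f i : Matrix (Fin 2) (Fin 2) (ZMod (p ^ n))) 1 1 * (f i : Matrix (Fin 2) (Fin 2) (ZMod (p ^ n))) 1 1 - (f i : Matrix (Fin 2) (Fin 2) (ZMod (p ^ n))) 0 1 * (f i : Matrix (Fin 2) (Fin 2) (ZMod (p ^ n))) 1 0 := by
            rw [hrec i]; simp
          rw [ha, hd, Units.val_mul]
          linear_combination ((f i : Matrix (Fin 2) (Fin 2) (ZMod (p ^ n))) 0 0 + (f i : Matrix (Fin 2) (Fin 2) (ZMod (p ^ n))) 1 1) * hu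
            - ((u : ZMod (p ^ n)) * ((f 0 : Matrix (Fin 2) (Fin 2) (ZMod (p ^ n))) 0 0 - (f 0 : Matrix (Fin 2) (Fin 2) (ZMod (p ^ n))) 1 1)) * hv
      intro i
      obtain ⟨u, hu⟩ := hD i
      refine ⟨u, ?_⟩
      ext j k
      fin_cases j <;> fin_cases k <;> simp [Matrix.smul_apply] <;>
        first
          | linear_combination (↑u2⁻¹ : ZMod (p ^ n)) * hu
          | linear_combination (-(↑u2⁻¹ : ZMod (p ^ n))) * hu
  · -- diagonal for i ≥ n
    have hBC : ∀ i, ∃ s t, (f i : Matrix (Fin 2) (Fin 2) (ZMod (p ^ n))) 0 1 = (p : ZMod (p ^ n)) ^ i * s ∧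
        (f i : Matrix (Fin 2) (Fin 2) (ZMod (p ^ n))) 1 0 = (p : ZMod (p ^ n)) ^ i * t := by
      intro i
      induction i with
      | zero => exact ⟨(f 0 : Matrix (Fin 2) (Fin 2) (ZMod (p ^ n))) 0 1, (f 0 : Matrix (Fin 2) (Fin 2) (ZMod (p ^ n))) 1 0, by simp, by simp⟩
      | succ i ih =>
        obtain ⟨s, t, hs, ht⟩ := ih
        obtain ⟨e, he⟩ := hdiff i
        have hb : (f (i + 1) : Matrix (Fin 2) (Fin 2) (ZMod (p ^ n))) 0 1 = (f i : Matrix (Fin 2) (Fin 2) (ZMod (p ^ n))) 0 1 * ((f i : Matrix (Fin 2) (Fin 2) (ZMod (p ^ n))) 1 1 - (f i : Matrix (Fin 2) (Fin 2) (ZMod (p ^ n))) 0 0) := by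
          rw [hrec i]; simp
        have hc : (f (i + 1) : Matrix (Fin 2) (Fin 2) (ZMod (p ^ n))) 1 0 = (f i : Matrix (Fin 2) (Fin 2) (ZMod (p ^ n))) 1 0 * ((f i : Matrix (Fin 2) (Fin 2) (ZMod (p ^ n))) 0 0 - (f i : Matrix (Fin 2) (Fin 2) (ZMod (p ^ n))) 1 1) := by
          rw [hrec i]; simp
        refine ⟨-(s * e), t * e, ?_, ?_⟩
        · rw [hb]
          linear_combination ((f i : Matrix (Fin 2) (Fin 2) (ZMod (p ^ n))) 1 1 - (f i : Matrix (Fin 2) (Fin 2) (ZMod (p ^ n))) 0 0) * hs - ((p : ZMod (p ^ n)) ^ i * s) * he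
        · rw [hc]
          linear_combination ((f i : Matrix (Fin 2) (Fin 2) (ZMod (p ^ n))) 0 0 - (f i : Matrix (Fin 2) (Fin 2) (ZMod (p ^ n))) 1 1) * ht + ((p : ZMod (p ^ n)) ^ i * t) * he
    intro i hi
    obtain ⟨s, t, hs, ht⟩ := hBC i
    have hp0 : (p : ZMod (p ^ n)) ^ i = 0 := by
      have h1 : (p : ZMod (p ^ n)) ^ n = 0 := by
        rw [← Nat.cast_pow, ZMod.natCast_self]
      have h2 : (p : ZMod (p ^ n)) ^ i = (p : ZMod (p ^ n)) ^ n * (p : ZMod (p ^ n)) ^ (i - n) := by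
        rw [← pow_add]
        congr 1
        omega
      rw [h2, h1, zero_mul]
    have h01 : (f i : Matrix (Fin 2) (Fin 2) (ZMod (p ^ n))) 0 1 = 0 := by rw [hs, hp0, zero_mul]
    have h10 : (f i : Matrix (Fin 2) (Fin 2) (ZMod (p ^ n))) 1 0 = 0 := by rw [ht, hp0, zero_mul]
    intro j k hjk
    fin_cases j <;> fin_cases k <;> simp_all
end

section
/- Let p be an odd prime and H a p-subgroup of GL_2(ℤ/p^nℤ) stable under conjugation by C = [[1,0],[0,−1]]. Let 𝒟 be the subgroup of diagonal matrices in H. Then det(H) = det(𝒟) as subgroups of (ℤ/p^nℤ)^×. -/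
open Matrix

private lemma ch2' {R : Type*} [CommRing R] (N : Matrix (Fin 2) (Fin 2) R) :
    N * N = N.trace • N - N.det • (1 : Matrix (Fin 2) (Fin 2) R) := by
  ext i j
  fin_cases i <;> fin_cases j <;>
    simp [Matrix.mul_apply, Fin.sum_univ_two, Matrix.trace_fin_two, Matrix.det_fin_two,
      Matrix.one_apply] <;> ring

private lemma powN' {R : Type*} [CommRing R] (N : Matrix (Fin 2) (Fin 2) R) (t : R)
    (h : N * N = t • N) : ∀ j : ℕ, N ^ (j + 1) = t ^ j • N := by
  intro j
  induction j with
  | zero => simp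
  | succ j ih => rw [pow_succ, ih, smul_mul_assoc, h, smul_smul, pow_succ]

/-- A 2×2 matrix over `ZMod p` of `p`-power order is unipotent. -/
private lemma lemA {p : ℕ} [Fact p.Prime] (g : Matrix (Fin 2) (Fin 2) (ZMod p)) (k : ℕ)
    (hg : g ^ (p ^ k) = 1) : (g - 1) * (g - 1) = 0 := by
  haveI : Nonempty (Fin 2) := ⟨0⟩
  set N := g - 1 with hN
  have hcomm : Commute g (1 : Matrix (Fin 2) (Fin 2) (ZMod p)) := Commute.one_right g
  have hNp : N ^ (p ^ k) = 0 := by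
    rw [hN, sub_pow_char_pow_of_commute p k hcomm, hg, one_pow, sub_self]
  have hpk : p ^ k ≠ 0 := pow_ne_zero k (Fact.out : p.Prime).ne_zero
  have hdet : N.det = 0 := by
    have : N.det ^ (p ^ k) = 0 := by rw [← Matrix.det_pow, hNp]; simp
    exact pow_eq_zero_iff hpk |>.mp this
  have hch : N * N = N.trace • N := by rw [ch2', hdet]; simp
  rcases Nat.eq_zero_or_pos k with hk | hk
  · subst hk; simp at hg
    rw [hN, hg]; simp
  · have hpk1 : 1 ≤ p ^ k := Nat.one_le_iff_ne_zero.mpr hpk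
    have := powN' N N.trace hch (p ^ k - 1)
    rw [Nat.sub_add_cancel hpk1, hNp] at this
    by_cases ht : N.trace = 0
    · rw [hch, ht, zero_smul]
    · have h0 : (N.trace ^ (p ^ k - 1))⁻¹ • (N.trace ^ (p ^ k - 1) • N) = 0 := by
        rw [← this]; simp
      rw [smul_smul, inv_mul_cancel₀ (pow_ne_zero _ ht), one_smul] at h0
      rw [h0]; simp

/-- Unipotent 2×2 matrices have trace 2. -/
private lemma traceEq {p : ℕ} [Fact p.Prime] (g : Matrix (Fin 2) (Fin 2) (ZMod p))
    (h : (g - 1) * (g - 1) = 0) : g 0 0 + g 1 1 = 2 := by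
  have e00 := congrFun (congrFun h 0) 0
  have e01 := congrFun (congrFun h 0) 1
  have e10 := congrFun (congrFun h 1) 0
  have e11 := congrFun (congrFun h 1) 1
  simp [Matrix.mul_apply, Fin.sum_univ_two, Matrix.one_apply] at e00 e01 e10 e11
  by_contra hs
  have hs' : g 0 0 + g 1 1 - 2 ≠ 0 := fun hz => hs (by linear_combination hz)
  have hb : g 0 1 = 0 := by
    have : g 0 1 * (g 0 0 + g 1 1 - 2) = 0 := by linear_combination e01
    rcases mul_eq_zero.mp this with h' | h'
    · exact h'
    · exact absurd h' hs'
  have hc : g 1 0 = 0 := by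
    have : g 1 0 * (g 0 0 + g 1 1 - 2) = 0 := by linear_combination e10
    rcases mul_eq_zero.mp this with h' | h'
    · exact h'
    · exact absurd h' hs'
  have ha : g 0 0 = 1 := by
    have h1 : (g 0 0 - 1) * (g 0 0 - 1) = 0 := by linear_combination e00 - g 1 0 * hb
    have := mul_self_eq_zero.mp h1
    linear_combination this
  have hd : g 1 1 = 1 := by
    have h1 : (g 1 1 - 1) * (g 1 1 - 1) = 0 := by linear_combination e11 - g 0 1 * hc
    have := mul_self_eq_zero.mp h1
    linear_combination this
  exact hs (by rw [ha, hd]; norm_num)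

private lemma e00Eq {p : ℕ} [Fact p.Prime] (g : Matrix (Fin 2) (Fin 2) (ZMod p))
    (h : (g - 1) * (g - 1) = 0) :
    (g 0 0 - 1) * (g 0 0 - 1) + g 0 1 * g 1 0 = 0 := by
  have e00 := congrFun (congrFun h 0) 0
  simp [Matrix.mul_apply, Fin.sum_univ_two, Matrix.one_apply] at e00
  linear_combination e00

/-- Algebraic consequence: the two diagonal entries agree mod p. -/
private lemma lemB {p : ℕ} [Fact p.Prime] (hp : p.Prime) (hodd : p ≠ 2)
    (a b c d : ZMod p)
    (h1 : a + d = 2)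
    (h2 : (a - 1) * (a - 1) + b * c = 0)
    (h3 : (a * a - b * c) + (d * d - b * c) = 2) : a = d := by
  have h2ne : (2 : ZMod p) ≠ 0 := by
    intro h
    have : ((2 : ℕ) : ZMod p) = 0 := by exact_mod_cast h
    have hdvd : p ∣ 2 := (ZMod.natCast_eq_zero_iff 2 p).mp this
    exact hodd ((Nat.prime_dvd_prime_iff_eq hp Nat.prime_two).mp hdvd)
  have h4 : (4 : ZMod p) ≠ 0 := by
    intro h
    have : (2 : ZMod p) * 2 = 0 := by linear_combination h
    rcases mul_eq_zero.mp this with h' | h' <;> exact h2ne h'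
  have hbc : b * c = 0 := by
    have h4bc : (4 : ZMod p) * (b * c) = 0 := by
      linear_combination 2 * h2 - h3 + (d - a + 2) * h1
    rcases mul_eq_zero.mp h4bc with h' | h'
    · exact absurd h' h4
    · exact h'
  have ha : a = 1 := by
    have h1' : (a - 1) * (a - 1) = 0 := by linear_combination h2 - hbc
    have := mul_self_eq_zero.mp h1'
    linear_combination this
  have hd : d = 1 := by linear_combination h1 - ha
  rw [ha, hd]

private def iterC {G : Type*} [Group G] (Cg h : G) : ℕ → G
  | 0 => h
  | k + 1 => iterC Cg h k * (Cg * iterC Cg h k * Cg⁻¹)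

/-- For an odd prime p and a p-subgroup H of GL_2(ℤ/p^nℤ) stable under
conjugation by C = [[1,0],[0,-1]], the determinants of elements of H coincide
with the determinants of the diagonal elements of H. -/
theorem stmt16 (p : ℕ) (hp : p.Prime) (hodd : p ≠ 2) (n : ℕ) (hn : 0 < n)
    (H : Subgroup (GL (Fin 2) (ZMod (p ^ n)))) (hH : IsPGroup p H)
    (C : GL (Fin 2) (ZMod (p ^ n)))
    (hC : (C : Matrix (Fin 2) (Fin 2) (ZMod (p ^ n))) = !![1, 0; 0, -1])
    (hstab : ∀ h ∈ H, C * h * C⁻¹ ∈ H) :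
    {x : (ZMod (p ^ n))ˣ | ∃ h ∈ H, Matrix.GeneralLinearGroup.det h = x}
      = {x : (ZMod (p ^ n))ˣ | ∃ h ∈ H,
          ((h : Matrix (Fin 2) (Fin 2) (ZMod (p ^ n)))).IsDiag ∧
          Matrix.GeneralLinearGroup.det h = x} := by
  haveI : Fact p.Prime := ⟨hp⟩
  haveI : NeZero (p ^ n) := ⟨pow_ne_zero n hp.ne_zero⟩
  have hdvd : p ∣ p ^ n := dvd_pow_self p hn.ne'
  set R := ZMod (p ^ n) with hR
  let f : R →+* ZMod p := ZMod.castHom hdvd (ZMod p)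
  -- C is an involution
  have hCC : C * C = 1 := by
    apply Units.ext
    show ((C : Matrix (Fin 2) (Fin 2) R) * (C : Matrix (Fin 2) (Fin 2) R)) = 1
    rw [hC]
    ext i j
    fin_cases i <;> fin_cases j <;>
      simp [Matrix.mul_apply, Fin.sum_univ_two, Matrix.one_apply]
  have hCinv : C⁻¹ = C := inv_eq_of_mul_eq_one_right hCC
  -- every member of H has p-power order
  have horder : ∀ M : GL (Fin 2) R, M ∈ H → ∃ k, M ^ (p ^ k) = 1 := by
    intro M hM
    obtain ⟨k, hk⟩ := hH ⟨M, hM⟩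
    refine ⟨k, ?_⟩
    have := congrArg (Subtype.val) hk
    simpa using this
  -- unipotence mod p of any member of H
  have hunip : ∀ M : GL (Fin 2) R, M ∈ H →
      (f.mapMatrix (M : Matrix (Fin 2) (Fin 2) R) - 1)
        * (f.mapMatrix (M : Matrix (Fin 2) (Fin 2) R) - 1) = 0 := by
    intro M hM
    obtain ⟨k, hk⟩ := horder M hM
    apply lemA _ k
    have h1 : ((M : Matrix (Fin 2) (Fin 2) R)) ^ (p ^ k) = 1 := by
      have := congrArg (Units.val) hk
      simpa using this
    rw [← map_pow, h1, _root_.map_one]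
  -- the conjugate product, as a matrix
  have hconj : ∀ M : GL (Fin 2) R,
      ((M * (C * M * C⁻¹) : GL (Fin 2) R) : Matrix (Fin 2) (Fin 2) R)
        = (M : Matrix (Fin 2) (Fin 2) R) *
            (!![1,0;0,-1] * (M : Matrix (Fin 2) (Fin 2) R) * !![1,0;0,-1]) := by
    intro M
    rw [hCinv]
    rw [show ((M * (C * M * C) : GL (Fin 2) R) : Matrix (Fin 2) (Fin 2) R)
        = (M : Matrix (Fin 2) (Fin 2) R) * ((C : Matrix (Fin 2) (Fin 2) R)
            * (M : Matrix (Fin 2) (Fin 2) R) * (C : Matrix (Fin 2) (Fin 2) R)) from rfl, hC]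
  -- conjugation by the diagonal involution, entrywise
  have hBmat : ∀ A : Matrix (Fin 2) (Fin 2) R,
      !![1,0;0,-1] * A * !![1,0;0,-1] = !![A 0 0, -(A 0 1); -(A 1 0), A 1 1] := by
    intro A
    ext i j
    fin_cases i <;> fin_cases j <;>
      simp [Matrix.mul_apply, Matrix.vecMul, Matrix.vecHead, Matrix.vecTail,
        dotProduct, Fin.sum_univ_two] <;> ring
  -- key divisibility: diagonal entries of members of H agree mod p
  have key : ∀ M : GL (Fin 2) R, M ∈ H → ∃ r : R,
      (M : Matrix (Fin 2) (Fin 2) R) 1 1 - (M : Matrix (Fin 2) (Fin 2) R) 0 0 = (p : R) * r := by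
    intro M hM
    set A := (M : Matrix (Fin 2) (Fin 2) R) with hA
    have hu := hunip M hM
    have ht1 := traceEq _ hu
    have he := e00Eq _ hu
    have hM' : M * (C * M * C⁻¹) ∈ H := H.mul_mem hM (hstab M hM)
    have ht2 := traceEq _ (hunip _ hM')
    rw [hconj M] at ht2
    simp only [RingHom.mapMatrix_apply, Matrix.map_apply] at ht1 he ht2
    -- compute the entries of the product matrix
    have hP00 : ((A * (!![1,0;0,-1] * A * !![1,0;0,-1]) : Matrix (Fin 2) (Fin 2) R)) 0 0
        = A 0 0 * A 0 0 - A 0 1 * A 1 0 := by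
      rw [hBmat]
      simp [Matrix.mul_apply, Fin.sum_univ_two]; ring
    have hP11 : ((A * (!![1,0;0,-1] * A * !![1,0;0,-1]) : Matrix (Fin 2) (Fin 2) R)) 1 1
        = A 1 1 * A 1 1 - A 0 1 * A 1 0 := by
      rw [hBmat]
      simp [Matrix.mul_apply, Fin.sum_univ_two]; ring
    rw [← hA, hP00, hP11] at ht2
    have heq : f (A 0 0) = f (A 1 1) := by
      apply lemB hp hodd (f (A 0 0)) (f (A 0 1)) (f (A 1 0)) (f (A 1 1))
      · exact ht1
      · exact he
      · simpa only [_root_.map_sub, _root_.map_mul] using ht2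
    have h0 : f (A 1 1 - A 0 0) = 0 := by rw [map_sub, ← heq, sub_self]
    set y := A 1 1 - A 0 0 with hy
    have hval : ((y.val : ℕ) : ZMod p) = 0 := by
      rw [ZMod.natCast_val, ← ZMod.castHom_apply (h := hdvd)]
      exact h0
    obtain ⟨m, hm⟩ := (ZMod.natCast_eq_zero_iff _ p).mp hval
    refine ⟨(m : R), ?_⟩
    have hy2 : y = ((y.val : ℕ) : R) := by rw [ZMod.natCast_val, ZMod.cast_id]
    rw [hy2, hm]
    push_cast
    exact Nat.cast_mul (α := ZMod (p ^ n)) p m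
  -- iteration stays in H
  have hiter : ∀ h ∈ H, ∀ k, iterC C h k ∈ H := by
    intro h hh k
    induction k with
    | zero => exact hh
    | succ k ih => exact H.mul_mem ih (hstab _ ih)
  -- determinant of the iteration
  have hdetiter : ∀ (h : GL (Fin 2) R) (k : ℕ),
      Matrix.GeneralLinearGroup.det (iterC C h k)
        = Matrix.GeneralLinearGroup.det h ^ (2 ^ k) := by
    intro h k
    induction k with
    | zero => simp [iterC]
    | succ k ih =>
      show Matrix.GeneralLinearGroup.det (iterC C h k * (C * iterC C h k * C⁻¹)) = _
      rw [_root_.map_mul, _root_.map_mul, _root_.map_mul, map_inv]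
      rw [mul_comm (Matrix.GeneralLinearGroup.det C) (Matrix.GeneralLinearGroup.det (iterC C h k)),
        mul_assoc, mul_inv_cancel, mul_one, ih, ← pow_add, pow_succ]
      congr 1
      ring
  -- off-diagonal entries gain a factor of p at each step
  have hdiv : ∀ h ∈ H, ∀ k, ∃ u v : R,
      ((iterC C h k : GL (Fin 2) R) : Matrix (Fin 2) (Fin 2) R) 0 1 = (p : R) ^ k * u ∧
      ((iterC C h k : GL (Fin 2) R) : Matrix (Fin 2) (Fin 2) R) 1 0 = (p : R) ^ k * v := by
    intro h hh k
    induction k with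
    | zero =>
      refine ⟨((iterC C h 0 : GL (Fin 2) R) : Matrix (Fin 2) (Fin 2) R) 0 1,
        ((iterC C h 0 : GL (Fin 2) R) : Matrix (Fin 2) (Fin 2) R) 1 0, ?_, ?_⟩ <;> simp
    | succ k ih =>
      obtain ⟨u, v, hu, hv⟩ := ih
      obtain ⟨r, hr⟩ := key _ (hiter h hh k)
      set A := ((iterC C h k : GL (Fin 2) R) : Matrix (Fin 2) (Fin 2) R) with hA
      refine ⟨u * r, v * (-r), ?_, ?_⟩
      · have hE : ((iterC C h (k+1) : GL (Fin 2) R) : Matrix (Fin 2) (Fin 2) R) 0 1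
            = A 0 1 * (A 1 1 - A 0 0) := by
          show ((iterC C h k * (C * iterC C h k * C⁻¹) : GL (Fin 2) R)
              : Matrix (Fin 2) (Fin 2) R) 0 1 = _
          rw [hconj, hBmat, ← hA]
          simp [Matrix.mul_apply, Fin.sum_univ_two]
          ring
        rw [hE, hu, hr, pow_succ]
        ring
      · have hE : ((iterC C h (k+1) : GL (Fin 2) R) : Matrix (Fin 2) (Fin 2) R) 1 0
            = A 1 0 * (A 0 0 - A 1 1) := by
          show ((iterC C h k * (C * iterC C h k * C⁻¹) : GL (Fin 2) R)
              : Matrix (Fin 2) (Fin 2) R) 1 0 = _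
          rw [hconj, hBmat, ← hA]
          simp [Matrix.mul_apply, Fin.sum_univ_two]
          ring
        have hr' : A 0 0 - A 1 1 = (p : R) * (-r) := by rw [← neg_sub, hr]; ring
        rw [hE, hv, hr', pow_succ]
        ring
  -- now the set equality
  ext x
  simp only [Set.mem_setOf_eq]
  constructor
  · rintro ⟨h, hh, hdet⟩
    obtain ⟨k, hk⟩ := horder h hh
    have hxord : x ^ (p ^ k) = 1 := by
      rw [← hdet, ← map_pow, hk, _root_.map_one]
    have ho : orderOf x ∣ p ^ k := orderOf_dvd_of_pow_eq_one hxord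
    obtain ⟨i, _, hoi⟩ := (Nat.dvd_prime_pow hp).mp ho
    have hcop : Nat.Coprime (2 ^ n) (orderOf x) := by
      rw [hoi]
      exact Nat.Coprime.pow n i ((Nat.coprime_primes Nat.prime_two hp).mpr (Ne.symm hodd))
    by_cases ho1 : orderOf x = 1
    · have hx1 : x = 1 := orderOf_eq_one_iff.mp ho1
      refine ⟨1, H.one_mem, ?_, by rw [_root_.map_one, hx1]⟩
      show (((1 : GL (Fin 2) R)) : Matrix (Fin 2) (Fin 2) R).IsDiag
      rw [Matrix.GeneralLinearGroup.coe_one]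
      exact Matrix.isDiag_one
    · have h1o : 1 < orderOf x := by
        have : 0 < orderOf x := orderOf_pos x
        omega
      obtain ⟨j, -, hj⟩ := Nat.exists_mul_mod_eq_one_of_coprime hcop h1o
      refine ⟨iterC C (h ^ j) n, hiter _ (H.pow_mem hh j) n, ?_, ?_⟩
      · obtain ⟨u, v, hu, hv⟩ := hdiv _ (H.pow_mem hh j) n
        have hpn : (p : R) ^ n = 0 := by
          rw [← Nat.cast_pow]
          exact ZMod.natCast_self (p ^ n)
        rw [hpn, zero_mul] at hu hv
        intro a b hab
        fin_cases a <;> fin_cases b <;> simp_all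
      · rw [hdetiter, map_pow, hdet, ← pow_mul]
        calc x ^ (j * 2 ^ n) = x ^ (2 ^ n * j) := by rw [Nat.mul_comm]
          _ = x ^ (2 ^ n * j % orderOf x) := (pow_mod_orderOf x _).symm
          _ = x ^ 1 := by rw [hj]
          _ = x := pow_one x
  · rintro ⟨h, hh, -, hdet⟩
    exact ⟨h, hh, hdet⟩
end

section
/- Let ℓ > 2 be a prime, and let G be a subgroup of GL_2(ℤ_ℓ) containing h = [[1,0],[0,−1]]. Let A be the closed ℤ_ℓ-subalgebra of Mat_2(ℤ_ℓ) generated by G. Suppose G contains a matrix M₁ whose (2,1)-entry has valuation ≤ m and a matrix M₂ whose (1,2)-entry has valuation ≤ m. Then A contains ℓ^m · Mat_2(ℤ_ℓ). -/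
section aux
variable (ℓ : ℕ) [Fact (Nat.Prime ℓ)]

lemma two_isUnit' (hℓ : 2 < ℓ) : IsUnit (2 : ℤ_[ℓ]) := by
  rw [PadicInt.isUnit_iff]
  have h1 : ((2 : ℤ) : ℤ_[ℓ]) = 2 := by push_cast; ring
  have := (PadicInt.norm_int_lt_one_iff_dvd (p := ℓ) 2).not
  rw [h1] at this
  have hnd : ¬ ((ℓ : ℤ) ∣ 2) := by
    intro hd
    have := Int.le_of_dvd (by norm_num) hd
    omega
  have hlt := this.mpr hnd
  have hle : ‖(2 : ℤ_[ℓ])‖ ≤ 1 := PadicInt.norm_le_one _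
  linarith [lt_or_eq_of_le hle]

lemma extract' (m : ℕ) {a : ℤ_[ℓ]} (ha : ¬ (ℓ : ℤ_[ℓ]) ^ (m + 1) ∣ a) :
    ∃ c : ℤ_[ℓ], c * a = (ℓ : ℤ_[ℓ]) ^ m := by
  have ha0 : a ≠ 0 := by rintro rfl; exact ha (dvd_zero _)
  obtain ⟨n, u, hu⟩ := IsDiscreteValuationRing.eq_unit_mul_pow_irreducible ha0
    (PadicInt.irreducible_p (p := ℓ))
  have hnm : n ≤ m := by
    by_contra hn
    refine ha ⟨(ℓ : ℤ_[ℓ]) ^ (n - (m+1)) * u, ?_⟩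
    rw [hu]
    have : (m + 1) + (n - (m+1)) = n := by omega
    calc (↑u : ℤ_[ℓ]) * ↑ℓ ^ n = ↑ℓ ^ ((m+1) + (n - (m+1))) * ↑u := by rw [this]; ring
      _ = ↑ℓ ^ (m + 1) * (↑ℓ ^ (n - (m + 1)) * ↑u) := by rw [pow_add]; ring
  refine ⟨(ℓ : ℤ_[ℓ]) ^ (m - n) * ↑u⁻¹, ?_⟩
  rw [hu]
  calc (ℓ : ℤ_[ℓ]) ^ (m - n) * ↑u⁻¹ * (↑u * (ℓ:ℤ_[ℓ]) ^ n)
      = (↑u⁻¹ * ↑u) * ((ℓ:ℤ_[ℓ]) ^ (m-n) * (ℓ:ℤ_[ℓ]) ^ n) := by ring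
    _ = (ℓ : ℤ_[ℓ]) ^ m := by rw [u.inv_mul, one_mul, ← pow_add]; congr 1; omega

end aux

/-- Let ℓ > 2 be prime and G ≤ GL_2(ℤ_ℓ) containing h = [[1,0],[0,-1]].
Let A be the closed ℤ_ℓ-subalgebra of Mat_2(ℤ_ℓ) generated by G (the topological
closure of the algebra generated by the matrices of G). If G contains a matrix
whose (2,1)-entry has valuation ≤ m and one whose (1,2)-entry has valuation ≤ m
(i.e. not divisible by ℓ^{m+1}), then A ⊇ ℓ^m · Mat_2(ℤ_ℓ). -/
theorem stmt19 (ℓ : ℕ) [Fact (Nat.Prime ℓ)] (hℓ : 2 < ℓ) (m : ℕ)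
    (G : Subgroup (GL (Fin 2) ℤ_[ℓ]))
    (h : GL (Fin 2) ℤ_[ℓ]) (hhG : h ∈ G)
    (hmat : (h : Matrix (Fin 2) (Fin 2) ℤ_[ℓ]) = !![1, 0; 0, -1])
    (M₁ : GL (Fin 2) ℤ_[ℓ]) (hM₁ : M₁ ∈ G)
    (hM₁v : ¬ (ℓ : ℤ_[ℓ]) ^ (m + 1) ∣ (M₁ : Matrix (Fin 2) (Fin 2) ℤ_[ℓ]) 1 0)
    (M₂ : GL (Fin 2) ℤ_[ℓ]) (hM₂ : M₂ ∈ G)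
    (hM₂v : ¬ (ℓ : ℤ_[ℓ]) ^ (m + 1) ∣ (M₂ : Matrix (Fin 2) (Fin 2) ℤ_[ℓ]) 0 1) :
    ∀ B : Matrix (Fin 2) (Fin 2) ℤ_[ℓ],
      (ℓ : ℤ_[ℓ]) ^ m • B ∈ closure
        ((Algebra.adjoin ℤ_[ℓ]
          ((fun g : GL (Fin 2) ℤ_[ℓ] => (g : Matrix (Fin 2) (Fin 2) ℤ_[ℓ])) '' G)
          : Subalgebra ℤ_[ℓ] (Matrix (Fin 2) (Fin 2) ℤ_[ℓ])) : Set (Matrix (Fin 2) (Fin 2) ℤ_[ℓ])) := by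
  intro B
  apply subset_closure
  set A : Subalgebra ℤ_[ℓ] (Matrix (Fin 2) (Fin 2) ℤ_[ℓ]) :=
    Algebra.adjoin ℤ_[ℓ]
      ((fun g : GL (Fin 2) ℤ_[ℓ] => (g : Matrix (Fin 2) (Fin 2) ℤ_[ℓ])) '' G) with hAdef
  show (ℓ : ℤ_[ℓ]) ^ m • B ∈ A
  have memA : ∀ g : GL (Fin 2) ℤ_[ℓ], g ∈ G → (g : Matrix (Fin 2) (Fin 2) ℤ_[ℓ]) ∈ A :=
    fun g hg => Algebra.subset_adjoin ⟨g, hg, rfl⟩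
  have hhA := memA h hhG
  have hM₁A := memA M₁ hM₁
  have hM₂A := memA M₂ hM₂
  rw [hmat] at hhA
  obtain ⟨u2, hu2⟩ := two_isUnit' ℓ hℓ
  -- e11 and e22
  have he11eq : (↑u2⁻¹ : ℤ_[ℓ]) • ((1 : Matrix (Fin 2) (Fin 2) ℤ_[ℓ]) + !![1,0;0,-1])
      = !![1,0;0,0] := by
    have h2 : (↑u2⁻¹ : ℤ_[ℓ]) * 2 = 1 := by rw [← hu2]; exact u2.inv_mul
    ext i j
    fin_cases i <;> fin_cases j <;> simp [Matrix.one_apply] <;>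
      · rw [hu2]; norm_num
  have he22eq : (↑u2⁻¹ : ℤ_[ℓ]) • ((1 : Matrix (Fin 2) (Fin 2) ℤ_[ℓ]) - !![1,0;0,-1])
      = !![0,0;0,1] := by
    have h2 : (↑u2⁻¹ : ℤ_[ℓ]) * 2 = 1 := by rw [← hu2]; exact u2.inv_mul
    ext i j
    fin_cases i <;> fin_cases j <;> simp [Matrix.one_apply] <;>
      · rw [hu2]; norm_num
  have he11 : (!![1,0;0,0] : Matrix (Fin 2) (Fin 2) ℤ_[ℓ]) ∈ A := by
    rw [← he11eq]; exact A.smul_mem (A.add_mem A.one_mem hhA) _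
  have he22 : (!![0,0;0,1] : Matrix (Fin 2) (Fin 2) ℤ_[ℓ]) ∈ A := by
    rw [← he22eq]; exact A.smul_mem (A.sub_mem A.one_mem hhA) _
  -- antidiagonal products
  have key21 : (!![0,0;0,1] : Matrix (Fin 2) (Fin 2) ℤ_[ℓ]) * (M₁ : Matrix (Fin 2) (Fin 2) ℤ_[ℓ]) * !![1,0;0,0]
      = ((M₁ : Matrix (Fin 2) (Fin 2) ℤ_[ℓ]) 1 0) • (!![0,0;1,0] : Matrix (Fin 2) (Fin 2) ℤ_[ℓ]) := by
    ext i j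
    fin_cases i <;> fin_cases j <;>
      simp [Matrix.mul_apply, Matrix.smul_apply, Matrix.vecMul, dotProduct, Fin.sum_univ_two, mul_comm]
  have key12 : (!![1,0;0,0] : Matrix (Fin 2) (Fin 2) ℤ_[ℓ]) * (M₂ : Matrix (Fin 2) (Fin 2) ℤ_[ℓ]) * !![0,0;0,1]
      = ((M₂ : Matrix (Fin 2) (Fin 2) ℤ_[ℓ]) 0 1) • (!![0,1;0,0] : Matrix (Fin 2) (Fin 2) ℤ_[ℓ]) := by
    ext i j
    fin_cases i <;> fin_cases j <;>
      simp [Matrix.mul_apply, Matrix.smul_apply, Matrix.vecMul, dotProduct, Fin.sum_univ_two, mul_comm]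
  have ha21 : ((M₁ : Matrix (Fin 2) (Fin 2) ℤ_[ℓ]) 1 0) • (!![0,0;1,0] : Matrix (Fin 2) (Fin 2) ℤ_[ℓ]) ∈ A := by
    rw [← key21]; exact A.mul_mem (A.mul_mem he22 hM₁A) he11
  have ha12 : ((M₂ : Matrix (Fin 2) (Fin 2) ℤ_[ℓ]) 0 1) • (!![0,1;0,0] : Matrix (Fin 2) (Fin 2) ℤ_[ℓ]) ∈ A := by
    rw [← key12]; exact A.mul_mem (A.mul_mem he11 hM₂A) he22
  obtain ⟨c₁, hc₁⟩ := extract' ℓ m hM₁v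
  obtain ⟨c₂, hc₂⟩ := extract' ℓ m hM₂v
  have he21 : (ℓ : ℤ_[ℓ]) ^ m • (!![0,0;1,0] : Matrix (Fin 2) (Fin 2) ℤ_[ℓ]) ∈ A := by
    rw [← hc₁, ← smul_smul]; exact A.smul_mem ha21 _
  have he12 : (ℓ : ℤ_[ℓ]) ^ m • (!![0,1;0,0] : Matrix (Fin 2) (Fin 2) ℤ_[ℓ]) ∈ A := by
    rw [← hc₂, ← smul_smul]; exact A.smul_mem ha12 _
  -- decompose B
  have hB : (ℓ : ℤ_[ℓ]) ^ m • B
      = B 0 0 • ((ℓ : ℤ_[ℓ]) ^ m • !![1,0;0,0])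
      + B 0 1 • ((ℓ : ℤ_[ℓ]) ^ m • !![0,1;0,0])
      + B 1 0 • ((ℓ : ℤ_[ℓ]) ^ m • !![0,0;1,0])
      + B 1 1 • ((ℓ : ℤ_[ℓ]) ^ m • !![0,0;0,1]) := by
    ext i j
    fin_cases i <;> fin_cases j <;> simp [mul_comm]
  rw [hB]
  exact A.add_mem (A.add_mem (A.add_mem
    (A.smul_mem (A.smul_mem he11 _) _)
    (A.smul_mem he12 _))
    (A.smul_mem he21 _))
    (A.smul_mem (A.smul_mem he22 _) _)
end
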